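/- arXiv:1801.08456 — 12 statements merged into one kernel-verified Lean document; each statement's English description precedes it below -/
import Mathlib

section
/- The centralizer of a determining set D of a group G equals the center of G. -/
/-- A subset `D` of a group `G` is a determining set if the only automorphism of `G`
fixing every element of `D` is the identity. -/
def IsDetermining {G : Type*} [Group G] (D : Set G) : Prop :=
  ∀ φ : G ≃* G, (∀ x ∈ D, φ x = x) → φ = MulEquiv.refl G

/-- The determining number: the minimum size of a (finite) determining set. -/
noncomputable def detNumber (G : Type*) [Group G] : ℕ :=
  sInf {n | ∃ D : Finset G, D.card = n ∧ IsDetermining (D : Set G)}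

/-- The generating number: the minimum size of a (finite) generating set. -/
noncomputable def genNumber (G : Type*) [Group G] : ℕ :=
  sInf {n | ∃ D : Finset G, D.card = n ∧ Subgroup.closure (D : Set G) = ⊤}

theorem stmt4 {G : Type*} [Group G] (D : Set G) (hD : IsDetermining D) :
    Subgroup.centralizer D = Subgroup.center G := by
  apply le_antisymm
  · intro g hg
    have h : (MulAut.conj g : G ≃* G) = MulEquiv.refl G := by
      apply hD
      intro x hx
      have := hg x hx
      simp [MulAut.conj_apply]
      rw [← this]; simp
    rw [Subgroup.mem_center_iff]
    intro x
    have := congrArg (fun φ : G ≃* G => φ x) h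
    simp [MulAut.conj_apply] at this
    exact (mul_inv_eq_iff_eq_mul.mp this).symm
  · intro g hg
    exact fun x _ => Subgroup.mem_center_iff.mp hg x
end

section
/- If G is a finite group of order n with determining number m, then the automorphism group of G has order at most (n−1)!/(n−m−1)!. -/
theorem stmt5 {G : Type*} [Group G] [Finite G] (n m : ℕ)
    (hn : Nat.card G = n) (hm : detNumber G = m) :
    Nat.card (G ≃* G) ≤ (n - 1).factorial / (n - m - 1).factorial := by
  classical
  have : Fintype G := Fintype.ofFinite G
  set S : Set ℕ := {k | ∃ D : Finset G, D.card = k ∧ IsDetermining (D : Set G)} with hS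
  have hne : Fintype.card G ∈ S := by
    refine ⟨Finset.univ, Finset.card_univ, fun φ h => ?_⟩
    exact MulEquiv.ext fun x => h x (by simp)
  have hmS : m ∈ S := by
    rw [← hm]; exact Nat.sInf_mem ⟨_, hne⟩
  obtain ⟨D, hDcard, hD⟩ := hmS
  -- 1 ∉ D
  have h1 : (1 : G) ∉ D := by
    intro h1
    have hd' : IsDetermining ((D.erase 1 : Finset G) : Set G) := by
      intro φ hφ
      apply hD φ
      intro x hx
      by_cases hx1 : x = 1
      · simp [hx1]
      · exact hφ x (by simp [Finset.mem_erase, hx1, hx])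
    have : detNumber G ≤ (D.erase 1).card := Nat.sInf_le ⟨D.erase 1, rfl, hd'⟩
    rw [hm, Finset.card_erase_of_mem h1, hDcard] at this
    have hmpos : 0 < m := by
      rw [← hDcard]; exact Finset.card_pos.2 ⟨1, h1⟩
    omega
  -- injection
  have key : Nat.card (G ≃* G) ≤ Nat.card ((D : Set G) ↪ {x : G // x ≠ 1}) := by
    apply Nat.card_le_card_of_injective
      (f := fun φ : G ≃* G =>
        (⟨fun d => ⟨φ d.1, fun h => by
            have : φ d.1 = φ 1 := by simpa using h
            have := φ.injective this
            exact absurd (this ▸ d.2) (by simpa using h1)⟩,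
          fun a b hab => by
            have : φ a.1 = φ b.1 := congrArg Subtype.val hab
            exact Subtype.ext (φ.injective this)⟩ : (D : Set G) ↪ {x : G // x ≠ 1}))
    intro φ₁ φ₂ h
    have hagree : ∀ x ∈ (D : Set G), φ₁ x = φ₂ x := by
      intro x hx
      have := congrFun (congrArg (fun e : (D : Set G) ↪ _ => e.toFun) h) ⟨x, hx⟩
      exact congrArg Subtype.val this
    have := hD (φ₁.trans φ₂.symm) (fun x hx => by
      simp [MulEquiv.trans_apply, hagree x hx])
    ext x
    have := congrArg (fun e : G ≃* G => e x) this
    simp only [MulEquiv.trans_apply, MulEquiv.refl_apply] at this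
    exact (φ₂.symm_apply_eq.mp this)
  have hcard : Nat.card ((D : Set G) ↪ {x : G // x ≠ 1})
      = (n - 1).descFactorial m := by
    rw [Nat.card_eq_fintype_card, Fintype.card_embedding_eq]
    congr 1
    · have : Fintype.card {x : G // x ≠ 1} = Fintype.card G - 1 := by
        simp [Fintype.card_subtype_compl]
      rw [this, ← hn, Nat.card_eq_fintype_card]
    · simp [hDcard]
  refine le_trans (key.trans_eq hcard) ?_
  rcases le_or_gt m (n - 1) with hle | hlt
  · rw [Nat.descFactorial_eq_div hle]
    have : n - m - 1 = n - 1 - m := by omega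
    rw [this]
  · rw [Nat.descFactorial_eq_zero_iff_lt.2 hlt]
    exact Nat.zero_le _
end

section
/- Let G = H₁ × ⋯ × Hₘ be a direct product of finite groups. If X is a determining set of G, then for each i, the set of i-th coordinates of elements of X contains a determining set of Hᵢ; in particular α(G) ≥ max_i α(Hᵢ). -/
lemma proj_det {m : ℕ} (H : Fin m → Type*) [∀ i, Group (H i)]
    (X : Set (∀ i, H i)) (hX : IsDetermining X) (i : Fin m) :
    IsDetermining (Function.eval i '' X) := by
  intro φ hφ
  set e : ∀ j, H j ≃* H j := Function.update (fun j => MulEquiv.refl (H j)) i φ with he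
  have hΦ : MulEquiv.piCongrRight e = MulEquiv.refl (∀ j, H j) := by
    apply hX
    intro x hx
    funext j
    show e j (x j) = x j
    by_cases h : j = i
    · subst h
      rw [he, Function.update_self]
      exact hφ (x j) ⟨x, hx, rfl⟩
    · rw [he, Function.update_of_ne h]
      rfl
  ext a
  have := congrFun (congrArg (fun f => f.toFun) hΦ) (Pi.mulSingle i a)
  have h2 := congrFun this i
  simpa [MulEquiv.piCongrRight, he, Pi.mulSingle_eq_same] using h2

theorem stmt7 {m : ℕ} (H : Fin m → Type*) [∀ i, Group (H i)]
    [∀ i, Finite (H i)] (X : Set (∀ i, H i)) (hX : IsDetermining X) :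
    (∀ i, IsDetermining (Function.eval i '' X)) ∧
      ∀ i, detNumber (H i) ≤ detNumber (∀ j, H j) := by
  classical
  refine ⟨fun i => proj_det H X hX i, fun i => ?_⟩
  have : Fintype (∀ j, H j) := Fintype.ofFinite _
  have hne : {n | ∃ D : Finset (∀ j, H j), D.card = n ∧ IsDetermining (D : Set (∀ j, H j))}.Nonempty := by
    refine ⟨(Finset.univ : Finset (∀ j, H j)).card, Finset.univ, rfl, ?_⟩
    intro φ hφ
    exact MulEquiv.ext fun x => hφ x (by simp)
  obtain ⟨D, hcard, hdet⟩ := Nat.sInf_mem hne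
  calc detNumber (H i) ≤ (D.image (Function.eval i)).card := by
        apply Nat.sInf_le
        refine ⟨D.image (Function.eval i), rfl, ?_⟩
        have : ((D.image (Function.eval i) : Finset (H i)) : Set (H i))
            = Function.eval i '' (D : Set (∀ j, H j)) := by
          simp [Finset.coe_image]
        rw [this]
        exact proj_det H (D : Set (∀ j, H j)) hdet i
    _ ≤ D.card := Finset.card_image_le
    _ = detNumber (∀ j, H j) := hcard
end

section
/- Let G = H₁ × ⋯ × Hₘ be a direct product of finite groups whose orders are pairwise coprime. Then α(G) = max_i α(Hᵢ). -/
section Aux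

lemma detNumber_exists (G : Type*) [Group G] [Finite G] :
    ∃ D : Finset G, D.card = detNumber G ∧ IsDetermining (D : Set G) := by
  have := Fintype.ofFinite G
  have hne : {n | ∃ D : Finset G, D.card = n ∧ IsDetermining (D : Set G)}.Nonempty :=
    ⟨(Finset.univ : Finset G).card, Finset.univ, rfl,
      fun φ h => MulEquiv.ext fun x => h x (by simp)⟩
  exact Nat.sInf_mem hne

lemma detNumber_le {G : Type*} [Group G] {D : Finset G} (hD : IsDetermining (D : Set G)) :
    detNumber G ≤ D.card := Nat.sInf_le ⟨D, rfl, hD⟩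

variable {m : ℕ} {H : Fin m → Type*} [∀ i, Group (H i)]

/-- The automorphism of a product acting by `ψ` on coordinate `i` and trivially elsewhere. -/
def updEquiv (i : Fin m) (ψ : H i ≃* H i) : (∀ j, H j) ≃* (∀ j, H j) where
  toFun g := Function.update g i (ψ (g i))
  invFun g := Function.update g i (ψ.symm (g i))
  left_inv g := by
    funext j
    rcases eq_or_ne j i with rfl | h
    · simp
    · simp [Function.update_of_ne h]
  right_inv g := by
    funext j
    rcases eq_or_ne j i with rfl | h
    · simp
    · simp [Function.update_of_ne h]
  map_mul' a b := by
    funext j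
    rcases eq_or_ne j i with rfl | h
    · simp
    · simp [Function.update_of_ne h]

lemma coordB [∀ i, Finite (H i)]
    (hcop : ∀ i j, i ≠ j → Nat.Coprime (Nat.card (H i)) (Nat.card (H j)))
    (φ : (∀ j, H j) ≃* (∀ j, H j)) (i : Fin m) (g : ∀ j, H j) (hg : g i = 1) :
    φ g i = 1 := by
  classical
  set N := ∏ j ∈ Finset.univ.erase i, Nat.card (H j) with hN
  have hgN : g ^ N = 1 := by
    funext k
    rcases eq_or_ne k i with rfl | h
    · simp [hg]
    · have : orderOf (g k) ∣ N :=
        (orderOf_dvd_natCard (g k)).trans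
          (Finset.dvd_prod_of_mem _ (Finset.mem_erase.mpr ⟨h, Finset.mem_univ k⟩))
      simpa using orderOf_dvd_iff_pow_eq_one.mp this
  have h1 : φ g i ^ N = 1 := by
    have h2 : φ g ^ N = 1 := by rw [← map_pow, hgN, map_one]
    simpa using congrFun h2 i
  have hco : Nat.Coprime (Nat.card (H i)) N :=
    Nat.Coprime.prod_right fun j hj => hcop i j (Finset.mem_erase.mp hj).1.symm
  have hd : orderOf (φ g i) ∣ Nat.gcd (Nat.card (H i)) N :=
    Nat.dvd_gcd (orderOf_dvd_natCard _) (orderOf_dvd_of_pow_eq_one h1)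
  exact orderOf_eq_one_iff.mp (Nat.dvd_one.mp (hco ▸ hd))

lemma eval_eq [∀ i, Finite (H i)]
    (hcop : ∀ i j, i ≠ j → Nat.Coprime (Nat.card (H i)) (Nat.card (H j)))
    (φ : (∀ j, H j) ≃* (∀ j, H j)) (i : Fin m) (g : ∀ j, H j) :
    φ g i = φ (Pi.mulSingle i (g i)) i := by
  have h := coordB hcop φ i (g * (Pi.mulSingle i (g i))⁻¹) (by simp)
  rw [map_mul, map_inv] at h
  exact mul_inv_eq_one.mp (by simpa using h)

/-- The restriction of an automorphism of the product to coordinate `i`. -/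
def restr [∀ i, Finite (H i)]
    (hcop : ∀ i j, i ≠ j → Nat.Coprime (Nat.card (H i)) (Nat.card (H j)))
    (φ : (∀ j, H j) ≃* (∀ j, H j)) (i : Fin m) : H i ≃* H i where
  toFun a := φ (Pi.mulSingle i a) i
  invFun a := φ.symm (Pi.mulSingle i a) i
  left_inv a := by
    have h1 : Pi.mulSingle i (φ (Pi.mulSingle i a) i) = φ (Pi.mulSingle i a) := by
      funext j
      rcases eq_or_ne j i with rfl | h
      · simp
      · rw [Pi.mulSingle_eq_of_ne h]
        exact (coordB hcop φ j _ (Pi.mulSingle_eq_of_ne h a)).symm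
    show φ.symm (Pi.mulSingle i (φ (Pi.mulSingle i a) i)) i = a
    rw [h1]
    simp
  right_inv a := by
    have h1 : Pi.mulSingle i (φ.symm (Pi.mulSingle i a) i) = φ.symm (Pi.mulSingle i a) := by
      funext j
      rcases eq_or_ne j i with rfl | h
      · simp
      · rw [Pi.mulSingle_eq_of_ne h]
        exact (coordB hcop φ.symm j _ (Pi.mulSingle_eq_of_ne h a)).symm
    show φ (Pi.mulSingle i (φ.symm (Pi.mulSingle i a) i)) i = a
    rw [h1]
    simp
  map_mul' a b := by
    have : Pi.mulSingle i (a * b) = Pi.mulSingle i a * Pi.mulSingle i b := by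
      funext j
      rcases eq_or_ne j i with rfl | h
      · simp
      · simp [Pi.mulSingle_eq_of_ne h]
    simp only [this, map_mul, Pi.mul_apply]

end Aux

theorem stmt8 {m : ℕ} (H : Fin m → Type*) [∀ i, Group (H i)]
    [∀ i, Finite (H i)]
    (hcop : ∀ i j, i ≠ j → Nat.Coprime (Nat.card (H i)) (Nat.card (H j))) :
    detNumber (∀ i, H i) = Finset.univ.sup fun i => detNumber (H i) := by
  classical
  apply le_antisymm
  · -- upper bound
    choose D hcard hdet using fun i => detNumber_exists (H i)
    set n := Finset.univ.sup fun i => detNumber (H i) with hn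
    have hle : ∀ i, (D i).card ≤ n := fun i => by
      rw [hn, hcard i]; exact Finset.le_sup (f := fun j => detNumber (H j)) (Finset.mem_univ i)
    set f : ∀ i, Fin n → H i := fun i k =>
      if h : (k : ℕ) < (D i).card then ((D i).equivFin.symm ⟨k, h⟩ : H i) else 1 with hf
    have hcover : ∀ i, ∀ d ∈ D i, ∃ k : Fin n, f i k = d := by
      intro i d hd
      refine ⟨⟨((D i).equivFin ⟨d, hd⟩ : ℕ),
        lt_of_lt_of_le ((D i).equivFin ⟨d, hd⟩).2 (hle i)⟩, ?_⟩
      rw [hf]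
      dsimp only
      rw [dif_pos (((D i).equivFin ⟨d, hd⟩).2)]
      rw [show (⟨((D i).equivFin ⟨d, hd⟩ : ℕ), ((D i).equivFin ⟨d, hd⟩).2⟩ :
            Fin (D i).card) = (D i).equivFin ⟨d, hd⟩ from Fin.ext rfl,
        Equiv.symm_apply_apply]
    set DD : Finset (∀ i, H i) := Finset.image (fun k : Fin n => fun i => f i k) Finset.univ
      with hDDdef
    have hDD : IsDetermining (DD : Set (∀ i, H i)) := by
      intro φ hφ
      have hfixk : ∀ k : Fin n, φ (fun i => f i k) = fun i => f i k := by
        intro k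
        exact hφ _ (by rw [hDDdef]; simp)
      have hres : ∀ i, restr hcop φ i = MulEquiv.refl (H i) := by
        intro i
        apply hdet i
        intro d hd
        obtain ⟨k, hk⟩ := hcover i d (Finset.mem_coe.mp hd)
        show φ (Pi.mulSingle i d) i = d
        rw [← hk]
        have := eval_eq hcop φ i (fun j => f j k)
        rw [hfixk k] at this
        exact this.symm
      have hmh : φ.toMonoidHom = (MulEquiv.refl (∀ i, H i)).toMonoidHom := by
        apply MonoidHom.pi_ext
        intro i x
        show φ (Pi.mulSingle i x) = Pi.mulSingle i x
        funext j
        rcases eq_or_ne j i with rfl | h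
        · have := DFunLike.congr_fun (hres j) x
          have h' : φ (Pi.mulSingle j x) j = x := this; simpa using h'
        · rw [Pi.mulSingle_eq_of_ne h]
          exact coordB hcop φ j _ (Pi.mulSingle_eq_of_ne h x)
      exact MulEquiv.toMonoidHom_injective hmh
    calc detNumber (∀ i, H i) ≤ DD.card := detNumber_le hDD
      _ ≤ n := Finset.card_image_le.trans (by simp)
  · -- lower bound
    apply Finset.sup_le
    intro i _
    obtain ⟨D, hcard, hdet⟩ := detNumber_exists (∀ j, H j)
    have himg : IsDetermining ((D.image fun g => g i : Finset (H i)) : Set (H i)) := by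
      intro ψ hψ
      have h1 : updEquiv i ψ = MulEquiv.refl _ := by
        apply hdet
        intro d hd
        show Function.update d i (ψ (d i)) = d
        rw [hψ (d i) (by simpa using ⟨d, Finset.mem_coe.mp hd, rfl⟩),
          Function.update_eq_self]
      ext a
      have h2 := congrFun (DFunLike.congr_fun h1 (Pi.mulSingle i a)) i
      simpa [updEquiv] using h2
    exact (detNumber_le himg).trans (le_of_le_of_eq Finset.card_image_le hcard)
end

section
/- The determining number of ℤ/p^k ℤ × ℤ/p^l ℤ equals 2 for any prime p and positive integers k, l. -/
lemma exists_unipotent {A : Type*} [AddCommGroup A] (f : A →+ A) (hf : ∀ x, f (f x) = 0) :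
    ∃ e : A ≃+ A, ∀ x, e x = x + f x := by
  refine ⟨⟨⟨fun x => x + f x, fun x => x - f x, fun x => ?_, fun x => ?_⟩, fun x y => ?_⟩,
    fun _ => rfl⟩
  · simp only [map_add, hf]
    abel
  · simp only [map_sub, hf]
    abel
  · simp only [map_add]
    abel


lemma key (p k l : ℕ) (hp : p.Prime) (hk : 0 < k) (hl : 0 < l)
    (g : ZMod (p ^ k) × ZMod (p ^ l)) :
    ∃ f : (ZMod (p ^ k) × ZMod (p ^ l)) →+ (ZMod (p ^ k) × ZMod (p ^ l)),
      (∀ x, f (f x) = 0) ∧ f g = 0 ∧ ∃ x, f x ≠ 0 := by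
  haveI : Fact p.Prime := ⟨hp⟩
  haveI : NeZero p := ⟨hp.pos.ne'⟩
  haveI : NeZero (p ^ k) := ⟨pow_ne_zero _ hp.pos.ne'⟩
  haveI : NeZero (p ^ l) := ⟨pow_ne_zero _ hp.pos.ne'⟩
  have hdk : p ∣ p ^ k := dvd_pow_self p hk.ne'
  have hdl : p ∣ p ^ l := dvd_pow_self p hl.ne'
  set c1 : ZMod (p ^ k) →+* ZMod p := ZMod.castHom hdk (ZMod p) with hc1
  set c2 : ZMod (p ^ l) →+* ZMod p := ZMod.castHom hdl (ZMod p) with hc2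
  -- choose α β
  obtain ⟨α, β, hne, horth⟩ : ∃ α β : ZMod p, (α ≠ 0 ∨ β ≠ 0) ∧ α * c1 g.1 + β * c2 g.2 = 0 := by
    by_cases h : c2 g.2 = 0
    · exact ⟨0, 1, Or.inr one_ne_zero, by simp [h]⟩
    · exact ⟨c2 g.2, -(c1 g.1), Or.inl h, by ring⟩
  -- choose w
  obtain ⟨w, hw0, hwp, hwo⟩ : ∃ w : ZMod (p ^ k) × ZMod (p ^ l),
      w ≠ 0 ∧ p • w = 0 ∧ α * c1 w.1 + β * c2 w.2 = 0 := by
    have hp1 : 1 < p := hp.one_lt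
    have key2 : ∀ j : ℕ, 0 < j → p • ((p ^ (j - 1) : ℕ) : ZMod (p ^ j)) = 0 := by
      intro j hj
      rw [nsmul_eq_mul, ← Nat.cast_mul, ← pow_succ', Nat.sub_add_cancel hj, ZMod.natCast_self]
    by_cases hk2 : 2 ≤ k
    · refine ⟨(((p ^ (k - 1) : ℕ) : ZMod (p ^ k)), 0), ?_, ?_, ?_⟩
      · intro h
        have h1 : ((p ^ (k - 1) : ℕ) : ZMod (p ^ k)) = 0 := congrArg Prod.fst h
        rw [ZMod.natCast_eq_zero_iff] at h1
        have := (Nat.pow_dvd_pow_iff_le_right hp1).mp h1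
        omega
      · show (p • (((p ^ (k - 1) : ℕ) : ZMod (p ^ k)), (0 : ZMod (p ^ l)))) = 0
        rw [Prod.smul_mk, key2 k hk, smul_zero]
        exact Prod.mk_zero_zero
      · have h1 : c1 ((p ^ (k - 1) : ℕ) : ZMod (p ^ k)) = 0 := by
          rw [map_natCast, Nat.cast_pow, ZMod.natCast_self, zero_pow (by omega : k - 1 ≠ 0)]
        have h2 : α * c1 ((p ^ (k - 1) : ℕ) : ZMod (p ^ k)) + β * c2 0 = 0 := by
          rw [h1, map_zero, mul_zero, mul_zero, add_zero]
        exact h2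
    · by_cases hl2 : 2 ≤ l
      · refine ⟨(0, ((p ^ (l - 1) : ℕ) : ZMod (p ^ l))), ?_, ?_, ?_⟩
        · intro h
          have h1 : ((p ^ (l - 1) : ℕ) : ZMod (p ^ l)) = 0 := congrArg Prod.snd h
          rw [ZMod.natCast_eq_zero_iff] at h1
          have := (Nat.pow_dvd_pow_iff_le_right hp1).mp h1
          omega
        · show (p • ((0 : ZMod (p ^ k)), ((p ^ (l - 1) : ℕ) : ZMod (p ^ l)))) = 0
          rw [Prod.smul_mk, key2 l hl, smul_zero]
          exact Prod.mk_zero_zero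
        · have h1 : c2 ((p ^ (l - 1) : ℕ) : ZMod (p ^ l)) = 0 := by
            rw [map_natCast, Nat.cast_pow, ZMod.natCast_self, zero_pow (by omega : l - 1 ≠ 0)]
          have h2 : α * c1 0 + β * c2 ((p ^ (l - 1) : ℕ) : ZMod (p ^ l)) = 0 := by
            rw [h1, map_zero, mul_zero, mul_zero, add_zero]
          exact h2
      · have hk1 : k = 1 := by omega
        have hl1 : l = 1 := by omega
        have hpk : (p : ZMod (p ^ k)) = 0 := by
          rw [ZMod.natCast_eq_zero_iff, hk1, pow_one]
        have hpl : (p : ZMod (p ^ l)) = 0 := by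
          rw [ZMod.natCast_eq_zero_iff, hl1, pow_one]
        refine ⟨((((-β).val : ℕ) : ZMod (p ^ k)), ((α.val : ℕ) : ZMod (p ^ l))), ?_, ?_, ?_⟩
        · intro h
          have h1 : (((-β).val : ℕ) : ZMod (p ^ k)) = 0 := congrArg Prod.fst h
          have h2 : ((α.val : ℕ) : ZMod (p ^ l)) = 0 := congrArg Prod.snd h
          rw [ZMod.natCast_eq_zero_iff, hk1, pow_one] at h1
          rw [ZMod.natCast_eq_zero_iff, hl1, pow_one] at h2
          have hb0 : (-β) = 0 := by
            rw [← ZMod.val_eq_zero]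
            exact Nat.eq_zero_of_dvd_of_lt h1 (ZMod.val_lt _)
          have ha0 : α = 0 := by
            rw [← ZMod.val_eq_zero]
            exact Nat.eq_zero_of_dvd_of_lt h2 (ZMod.val_lt _)
          rcases hne with hx | hx
          · exact hx ha0
          · exact hx (neg_eq_zero.mp hb0)
        · show (p • ((((-β).val : ℕ) : ZMod (p ^ k)), ((α.val : ℕ) : ZMod (p ^ l)))) = 0
          rw [Prod.smul_mk, nsmul_eq_mul, nsmul_eq_mul, hpk, hpl, zero_mul, zero_mul]
          rfl
        · have e1 : c1 (((-β).val : ℕ) : ZMod (p ^ k)) = -β := by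
            rw [map_natCast, ZMod.natCast_val, ZMod.cast_id]
          have e2 : c2 ((α.val : ℕ) : ZMod (p ^ l)) = α := by
            rw [map_natCast, ZMod.natCast_val, ZMod.cast_id]
          show α * c1 _ + β * c2 _ = 0
          rw [e1, e2]; ring
  -- the linear functional
  set L : (ZMod (p ^ k) × ZMod (p ^ l)) →+ ZMod p :=
    { toFun := fun z => α * c1 z.1 + β * c2 z.2
      map_zero' := by simp
      map_add' := by intro x y; simp only [Prod.fst_add, Prod.snd_add, map_add]; ring } with hL
  have hmod : ∀ n : ℕ, (n % p) • w = n • w := by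
    intro n
    conv_rhs => rw [← Nat.div_add_mod n p, add_nsmul, mul_comm, mul_nsmul]
    rw [smul_comm, hwp, smul_zero, zero_add]
  have hval : ∀ s t : ZMod p, (s + t).val • w = s.val • w + t.val • w := by
    intro s t
    rw [ZMod.val_add, hmod, add_nsmul]
  refine ⟨{ toFun := fun z => (L z).val • w
            map_zero' := by simp
            map_add' := by
              intro x y
              show (L (x + y)).val • w = (L x).val • w + (L y).val • w
              rw [map_add]; exact hval _ _ }, ?_, ?_, ?_⟩
  · intro x
    simp only [AddMonoidHom.coe_mk, ZeroHom.coe_mk]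
    have : L ((L x).val • w) = 0 := by
      rw [map_nsmul]
      have : L w = 0 := hwo
      rw [this, smul_zero]
    rw [this, ZMod.val_zero, zero_smul]
  · simp only [AddMonoidHom.coe_mk, ZeroHom.coe_mk]
    have : L g = 0 := horth
    rw [this, ZMod.val_zero, zero_smul]
  · have hkey : ∀ u : ZMod p, u ≠ 0 → u.val • w ≠ 0 := by
      intro u hu h0
      have h1 : addOrderOf w ∣ u.val := addOrderOf_dvd_of_nsmul_eq_zero h0
      have h2 : addOrderOf w ∣ p := addOrderOf_dvd_of_nsmul_eq_zero hwp
      rcases (Nat.Prime.eq_one_or_self_of_dvd hp _ h2) with h | h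
      · exact hw0 (AddMonoid.addOrderOf_eq_one_iff.mp h)
      · have hup : 0 < u.val := ZMod.val_pos.mpr hu
        have h1' : p ∣ u.val := by rwa [h] at h1
        have : p ≤ u.val := Nat.le_of_dvd hup h1'
        exact absurd (ZMod.val_lt u) (not_lt.mpr this)
    rcases hne with h | h
    · refine ⟨(1, 0), ?_⟩
      have : L (1, 0) = α := by simp [hL]
      simp only [AddMonoidHom.coe_mk, ZeroHom.coe_mk, this]
      exact hkey _ h
    · refine ⟨(0, 1), ?_⟩
      have : L (0, 1) = β := by simp [hL]
      simp only [AddMonoidHom.coe_mk, ZeroHom.coe_mk, this]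
      exact hkey _ h

lemma key_mul (p k l : ℕ) (hp : p.Prime) (hk : 0 < k) (hl : 0 < l)
    (g : Multiplicative (ZMod (p ^ k) × ZMod (p ^ l))) :
    ∃ φ : Multiplicative (ZMod (p ^ k) × ZMod (p ^ l)) ≃*
        Multiplicative (ZMod (p ^ k) × ZMod (p ^ l)),
      φ g = g ∧ φ ≠ MulEquiv.refl _ := by
  obtain ⟨f, hff, hfg, hfnz⟩ := key p k l hp hk hl (Multiplicative.toAdd g)
  obtain ⟨e, he⟩ := exists_unipotent f hff
  refine ⟨AddEquiv.toMultiplicative e, ?_, ?_⟩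
  · show Multiplicative.ofAdd (e (Multiplicative.toAdd g)) = g
    rw [he, hfg, add_zero]
    rfl
  · intro hid
    obtain ⟨x, hx⟩ := hfnz
    have h2 : (AddEquiv.toMultiplicative e) (Multiplicative.ofAdd x) = Multiplicative.ofAdd x := by
      rw [hid]; rfl
    have hex : e x = x := by
      have := congrArg Multiplicative.toAdd h2
      simpa using this
    rw [he] at hex
    exact hx (by simpa using hex)

lemma upper (p k l : ℕ) (hp : p.Prime) (hk : 0 < k) (hl : 0 < l) :
    ∃ D : Finset (Multiplicative (ZMod (p ^ k) × ZMod (p ^ l))),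
      D.card = 2 ∧ IsDetermining (D : Set (Multiplicative (ZMod (p ^ k) × ZMod (p ^ l)))) := by
  classical
  haveI : Fact (1 < p ^ k) := ⟨Nat.one_lt_pow hk.ne' hp.one_lt⟩
  haveI : Fact (1 < p ^ l) := ⟨Nat.one_lt_pow hl.ne' hp.one_lt⟩
  haveI : NeZero (p ^ k) := ⟨pow_ne_zero _ hp.pos.ne'⟩
  haveI : NeZero (p ^ l) := ⟨pow_ne_zero _ hp.pos.ne'⟩
  set d1 : Multiplicative (ZMod (p ^ k) × ZMod (p ^ l)) :=
    Multiplicative.ofAdd ((1 : ZMod (p ^ k)), (0 : ZMod (p ^ l))) with hd1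
  set d2 : Multiplicative (ZMod (p ^ k) × ZMod (p ^ l)) :=
    Multiplicative.ofAdd ((0 : ZMod (p ^ k)), (1 : ZMod (p ^ l))) with hd2
  have hne : d1 ≠ d2 := by
    intro h
    have h1 : ((1 : ZMod (p ^ k)), (0 : ZMod (p ^ l))) = ((0 : ZMod (p ^ k)), (1 : ZMod (p ^ l))) :=
      Multiplicative.ofAdd.injective h
    exact one_ne_zero (congrArg Prod.fst h1)
  refine ⟨{d1, d2}, Finset.card_pair hne, ?_⟩
  intro φ hfix
  have h1 : φ d1 = d1 := hfix d1 (by simp)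
  have h2 : φ d2 = d2 := hfix d2 (by simp)
  apply MulEquiv.ext
  intro x
  obtain ⟨n, hn⟩ : ∃ n, n = (Multiplicative.toAdd x).1.val := ⟨_, rfl⟩
  obtain ⟨m, hm⟩ : ∃ m, m = (Multiplicative.toAdd x).2.val := ⟨_, rfl⟩
  have hx : x = d1 ^ n * d2 ^ m := by
    have hadd : (Multiplicative.toAdd x) =
        n • ((1 : ZMod (p ^ k)), (0 : ZMod (p ^ l))) +
        m • ((0 : ZMod (p ^ k)), (1 : ZMod (p ^ l))) := by
      refine Prod.ext ?_ ?_ <;>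
        simp [hn, hm, nsmul_eq_mul, ZMod.natCast_rightInverse (Multiplicative.toAdd x).1,
          ZMod.natCast_rightInverse (Multiplicative.toAdd x).2]
    calc x = Multiplicative.ofAdd (Multiplicative.toAdd x) := rfl
    _ = d1 ^ n * d2 ^ m := by
        rw [hadd, ofAdd_add, ofAdd_nsmul, ofAdd_nsmul]
  rw [hx, map_mul, map_pow, map_pow, h1, h2]
  rfl

theorem stmt9 (p k l : ℕ) (hp : p.Prime) (hk : 0 < k) (hl : 0 < l) :
    detNumber (Multiplicative (ZMod (p ^ k) × ZMod (p ^ l))) = 2 := by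
  obtain ⟨D2, hD2card, hD2det⟩ := upper p k l hp hk hl
  have h2mem : 2 ∈ {n | ∃ D : Finset (Multiplicative (ZMod (p ^ k) × ZMod (p ^ l))),
      D.card = n ∧ IsDetermining (D : Set (Multiplicative (ZMod (p ^ k) × ZMod (p ^ l))))} :=
    ⟨D2, hD2card, hD2det⟩
  refine le_antisymm (Nat.sInf_le h2mem) (le_csInf ⟨2, h2mem⟩ ?_)
  rintro n ⟨D, hDcard, hDdet⟩
  by_contra hn
  have hle : D.card ≤ 1 := by omega
  obtain ⟨g0, hsub⟩ := Finset.card_le_one_iff_subset_singleton.mp hle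
  obtain ⟨φ, hφg, hφne⟩ := key_mul p k l hp hk hl g0
  refine hφne (hDdet φ ?_)
  intro x hx
  have hxg : x = g0 := Finset.mem_singleton.mp (hsub (Finset.mem_coe.mp hx))
  rw [hxg]
  exact hφg
end

section
/- A finite group of order at least 2 has determining number 1 if and only if it is cyclic of order at least 3. -/
namespace DetAux

variable {G : Type*} [CommGroup G]

/-- The subgroup of `n`-th roots of unity in a commutative group. -/
def root (G : Type*) [CommGroup G] (n : ℕ) : Subgroup G where
  carrier := {x | x ^ n = 1}
  one_mem' := one_pow n
  mul_mem' := fun {a b} ha hb => by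
    simp only [Set.mem_setOf_eq] at *
    rw [mul_pow, ha, hb, mul_one]
  inv_mem' := fun {a} ha => by
    simp only [Set.mem_setOf_eq] at *
    rw [inv_pow, ha, inv_one]

lemma mem_root {n : ℕ} {x : G} : x ∈ root G n ↔ x ^ n = 1 := Iff.rfl

variable [Finite G]

lemma card_root_mul (m p : ℕ) :
    Nat.card (root G (m * p)) ≤ Nat.card (root G m) * Nat.card (root G p) := by
  set f : root G (m * p) →* root G p :=
    { toFun := fun x => ⟨(x : G) ^ m, by
        have hx := x.2
        rw [mem_root] at hx ⊢
        rw [← pow_mul]; exact hx⟩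
      map_one' := by ext; simp
      map_mul' := fun x y => by ext; simp [mul_pow] } with hf
  have h1 : Nat.card (root G (m * p)) =
      Nat.card ((root G (m * p)) ⧸ f.ker) * Nat.card f.ker :=
    Subgroup.card_eq_card_quotient_mul_card_subgroup f.ker
  have h2 : Nat.card ((root G (m * p)) ⧸ f.ker) ≤ Nat.card (root G p) := by
    rw [Nat.card_congr (QuotientGroup.quotientKerEquivRange f).toEquiv]
    exact Subgroup.card_le_card_group _
  have h3 : Nat.card f.ker ≤ Nat.card (root G m) := by
    apply Nat.card_le_card_of_injective
      (f := fun x : f.ker => (⟨((x : root G (m * p)) : G), by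
        rw [mem_root]
        have hx := x.2
        rw [MonoidHom.mem_ker] at hx
        have := congrArg (Subtype.val) hx
        simpa [hf] using this⟩ : root G m))
    intro x y hxy
    ext
    simpa using congrArg Subtype.val hxy
  calc Nat.card (root G (m * p)) = _ * _ := h1
    _ ≤ Nat.card (root G p) * Nat.card (root G m) := Nat.mul_le_mul h2 h3
    _ = _ := Nat.mul_comm _ _

lemma isCyclic_of_prime_card_le
    (h : ∀ p : ℕ, p.Prime → Nat.card (root G p) ≤ p) : IsCyclic G := by
  have key : ∀ n : ℕ, 0 < n → Nat.card (root G n) ≤ n := by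
    intro n
    induction n using Nat.strong_induction_on with
    | _ n ih =>
      intro hn
      rcases eq_or_ne n 1 with rfl | hn1
      · have hb : root G 1 = ⊥ := by
          ext x; simp [mem_root, Subgroup.mem_bot]
        rw [hb, Subgroup.card_bot]
      · obtain ⟨p, hp, hdvd⟩ := Nat.exists_prime_and_dvd hn1
        obtain ⟨m, rfl⟩ := hdvd
        have hm0 : 0 < m := by
          rcases Nat.eq_zero_or_pos m with rfl | h'
          · simp at hn
          · exact h' 
        have hmlt : m < p * m := by
          have := hp.two_le; nlinarith
        calc Nat.card (root G (p * m)) = Nat.card (root G (m * p)) := by rw [Nat.mul_comm]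
          _ ≤ Nat.card (root G m) * Nat.card (root G p) := card_root_mul m p
          _ ≤ m * p := Nat.mul_le_mul (ih m hmlt hm0) (h p hp)
          _ = p * m := Nat.mul_comm m p
  classical
  cases nonempty_fintype G
  apply isCyclic_of_card_pow_eq_one_le
  intro n hn
  have hcn : (Finset.filter (fun a : G => a ^ n = 1) Finset.univ).card
      = Nat.card (root G n) := by
    rw [Nat.card_eq_fintype_card, ← Fintype.card_subtype]
    exact (Fintype.card_congr (Equiv.subtypeEquivRight fun x => mem_root)).symm
  calc (Finset.filter (fun a : G => a ^ n = 1) Finset.univ).card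
      = Nat.card (root G n) := hcn
    _ ≤ n := key n hn
lemma exists_prime_sq_le (hnc : ¬ IsCyclic G) :
    ∃ p : ℕ, p.Prime ∧ p * p ≤ Nat.card (root G p) := by
  by_contra hcon
  push_neg at hcon
  apply hnc
  apply isCyclic_of_prime_card_le
  intro p hp
  by_contra hlt
  push_neg at hlt
  have hsq := hcon p hp
  haveI : Fact p.Prime := ⟨hp⟩
  have hpos : Nat.card (root G p) ≠ 0 := Nat.card_pos.ne'
  have huniq : ∀ {q : ℕ}, q.Prime → q ∣ Nat.card (root G p) → q = p := by
    intro q hq hqdvd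
    haveI : Fact q.Prime := ⟨hq⟩
    obtain ⟨x, hx⟩ := exists_prime_orderOf_dvd_card' (G := root G p) q hqdvd
    have hxp : x ^ p = 1 := by
      ext
      push_cast
      exact x.2
    have hdvd : orderOf x ∣ p := orderOf_dvd_of_pow_eq_one hxp
    rw [hx] at hdvd
    exact (Nat.prime_dvd_prime_iff_eq hq hp).mp hdvd
  obtain ⟨k, hk⟩ : ∃ k, Nat.card (root G p) = p ^ k :=
    ⟨_, Nat.eq_prime_pow_of_unique_prime_dvd hpos huniq⟩
  rw [hk] at hlt hsq
  have h2 : 2 ≤ k := by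
    by_contra hk2
    push_neg at hk2
    interval_cases k <;> simp_all <;> omega
  have : p ^ 2 ≤ p ^ k := Nat.pow_le_pow_right hp.pos h2
  rw [pow_two] at this
  omega
lemma exists_nontrivial_fixing (hnc : ¬ IsCyclic G) (g : G) :
    ∃ φ : G ≃* G, φ g = g ∧ ∃ x, φ x ≠ x := by
  obtain ⟨p, hp, hcard⟩ := exists_prime_sq_le hnc
  haveI : Fact p.Prime := ⟨hp⟩
  set P : Subgroup G := (powMonoidHom p : G →* G).range with hP
  have hgp : ∀ x : G, x ^ p ∈ P := fun x => ⟨x, rfl⟩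
  have hkerpow : (powMonoidHom p : G →* G).ker = root G p := by
    ext x; simp [MonoidHom.mem_ker, mem_root]
  have hcardQP : Nat.card (G ⧸ P) = Nat.card (root G p) := by
    have h1 : Nat.card G = Nat.card (G ⧸ P) * Nat.card P :=
      Subgroup.card_eq_card_quotient_mul_card_subgroup P
    have h2 : Nat.card G = Nat.card P * Nat.card (root G p) := by
      rw [← hkerpow]
      rw [Subgroup.card_eq_card_quotient_mul_card_subgroup (powMonoidHom p : G →* G).ker]
      congr 1
      exact Nat.card_congr (QuotientGroup.quotientKerEquivRange _).toEquiv
    have hPpos : 0 < Nat.card P := Nat.card_pos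
    apply Nat.eq_of_mul_eq_mul_left hPpos
    calc Nat.card P * Nat.card (G ⧸ P) = Nat.card G := by
          rw [Nat.mul_comm]; exact h1.symm
      _ = Nat.card P * Nat.card (root G p) := h2
  set N : Subgroup G := Subgroup.zpowers g ⊔ P with hN
  have hNne : N ≠ ⊤ := by
    intro htop
    set ρ := QuotientGroup.mk' P with hρ
    have hgen : ∀ y : G ⧸ P, y ∈ Subgroup.zpowers (ρ g) := by
      intro y
      obtain ⟨x, rfl⟩ := QuotientGroup.mk'_surjective P y
      have hx : x ∈ N := htop ▸ Subgroup.mem_top x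
      rw [hN, Subgroup.mem_sup] at hx
      obtain ⟨u, hu, v, hv, rfl⟩ := hx
      obtain ⟨k, rfl⟩ := Subgroup.mem_zpowers_iff.mp hu
      have hv1 : (QuotientGroup.mk' P) v = 1 := by
        rw [QuotientGroup.mk'_apply, QuotientGroup.eq_one_iff]; exact hv
      refine Subgroup.mem_zpowers_iff.mpr ⟨k, ?_⟩
      rw [map_mul, hv1, mul_one, map_zpow]
    have hord : orderOf (ρ g) = Nat.card (G ⧸ P) :=
      orderOf_eq_card_of_forall_mem_zpowers hgen
    have hdvd : orderOf (ρ g) ∣ p := orderOf_dvd_of_pow_eq_one (by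
      rw [← map_pow]
      rw [QuotientGroup.mk'_apply, QuotientGroup.eq_one_iff]
      exact hgp g)
    have hle : orderOf (ρ g) ≤ p := Nat.le_of_dvd hp.pos hdvd
    rw [hord, hcardQP] at hle
    have := hp.two_le
    nlinarith
  obtain ⟨x₀, hx₀⟩ : ∃ x, x ∉ N := by
    by_contra hcon; push_neg at hcon
    exact hNne ((Subgroup.eq_top_iff' N).mpr hcon)
  set π := QuotientGroup.mk' N with hπ
  have hQp : ∀ y : G ⧸ N, y ^ p = 1 := by
    intro y
    obtain ⟨x, rfl⟩ := QuotientGroup.mk'_surjective N y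
    rw [← map_pow]
    rw [QuotientGroup.mk'_apply, QuotientGroup.eq_one_iff]
    exact Subgroup.mem_sup_right (hgp x)
  haveI : Module (ZMod p) (Additive (G ⧸ N)) :=
    AddCommGroup.zmodModule (by
      intro a
      apply Additive.toMul.injective
      simpa using hQp a.toMul)
  have hv : Additive.ofMul (π x₀) ≠ (0 : Additive (G ⧸ N)) := by
    simpa [hπ, QuotientGroup.mk'_apply, QuotientGroup.eq_one_iff] using hx₀
  obtain ⟨f, hf⟩ : ∃ f : Module.Dual (ZMod p) (Additive (G ⧸ N)),
      f (Additive.ofMul (π x₀)) ≠ 0 := by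
    by_contra hcon; push_neg at hcon
    exact hv ((Module.forall_dual_apply_eq_zero_iff (ZMod p) _).mp hcon)
  set e : G → ZMod p := fun x => f (Additive.ofMul (π x)) with he
  have he_mul : ∀ x y, e (x * y) = e x + e y := by
    intro x y
    show f (Additive.ofMul (π (x * y))) = f (Additive.ofMul (π x)) + f (Additive.ofMul (π y))
    rw [map_mul]
    rw [show Additive.ofMul (π x * π y) = Additive.ofMul (π x) + Additive.ofMul (π y) from rfl]
    rw [map_add]
  have he_one : e 1 = 0 := by
    have := he_mul 1 1
    rw [mul_one] at this
    have h2 : e 1 + e 1 = e 1 + 0 := by rw [add_zero, ← this]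
    exact (add_left_cancel h2)
  have he_g : e g = 0 := by
    have h1 : π g = 1 := by
      rw [hπ, QuotientGroup.mk'_apply, QuotientGroup.eq_one_iff]
      exact Subgroup.mem_sup_left (Subgroup.mem_zpowers g)
    show f (Additive.ofMul (π g)) = 0
    rw [h1]
    simpa using map_zero f
  have he_x₀ : e x₀ ≠ 0 := hf
  have he_inv : ∀ x : G, e x⁻¹ = - e x := by
    intro x
    have h := he_mul x x⁻¹
    rw [mul_inv_cancel, he_one] at h
    linear_combination -h
  -- find a ≠ 1 with a ^ p = 1 and e a = 0
  set cE : root G p →* Multiplicative (ZMod p) :=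
    { toFun := fun x => Multiplicative.ofAdd (e x)
      map_one' := by
        simpa using congrArg Multiplicative.ofAdd he_one
      map_mul' := fun x y => by
        have h1 : e ((x : G) * y) = e x + e y := he_mul x y
        simpa using congrArg Multiplicative.ofAdd h1 } with hcE
  have hcardrange : Nat.card cE.range ≤ p := by
    calc Nat.card cE.range ≤ Nat.card (Multiplicative (ZMod p)) :=
          Subgroup.card_le_card_group _
      _ = p := by
          rw [Nat.card_congr Multiplicative.toAdd, Nat.card_zmod]
  have hker2 : p ≤ Nat.card cE.ker := by
    have h1 : Nat.card (root G p) = Nat.card ((root G p) ⧸ cE.ker) * Nat.card cE.ker :=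
      Subgroup.card_eq_card_quotient_mul_card_subgroup cE.ker
    have h2 : Nat.card ((root G p) ⧸ cE.ker) = Nat.card cE.range :=
      Nat.card_congr (QuotientGroup.quotientKerEquivRange cE).toEquiv
    have hkpos : 0 < Nat.card cE.ker := Nat.card_pos
    rw [h2] at h1
    nlinarith
  haveI : Nontrivial cE.ker := Finite.one_lt_card_iff_nontrivial.mp
    (lt_of_lt_of_le hp.one_lt hker2)
  obtain ⟨b, hb⟩ := exists_ne (1 : cE.ker)
  set a : G := ((b : root G p) : G) with ha
  have ha1 : a ≠ 1 := by
    intro h1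
    apply hb
    ext
    exact h1
  have hap : a ^ p = 1 := (b : root G p).2
  have hea : e a = 0 := by
    have hbm := b.2
    rw [MonoidHom.mem_ker] at hbm
    have := congrArg Multiplicative.toAdd hbm
    simpa [hcE] using this
  have horda : orderOf a = p := orderOf_eq_prime hap ha1
  have he_apow : ∀ n : ℕ, e (a ^ n) = 0 := by
    intro n
    induction n with
    | zero => simpa using he_one
    | succ n ih =>
        have := he_mul (a ^ n) a
        rw [← pow_succ] at this
        rw [this, ih, hea, add_zero]
  have key_pow : ∀ u v : ZMod p, a ^ (u + v).val = a ^ u.val * a ^ v.val := by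
    intro u v
    rw [ZMod.val_add]
    calc a ^ ((u.val + v.val) % p)
        = a ^ ((u.val + v.val) % orderOf a) := by rw [horda]
      _ = a ^ (u.val + v.val) := pow_mod_orderOf a _
      _ = a ^ u.val * a ^ v.val := pow_add a _ _
  have hmul : ∀ x y : G, (x * y) * a ^ (e (x * y)).val
      = (x * a ^ (e x).val) * (y * a ^ (e y).val) := by
    intro x y
    rw [he_mul, key_pow, mul_mul_mul_comm]
  have hleft : ∀ x : G, (x * a ^ (e x).val) * (a ^ (e (x * a ^ (e x).val)).val)⁻¹ = x := by
    intro x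
    rw [he_mul, he_apow, add_zero, mul_inv_cancel_right]
  have hright : ∀ x : G, (x * (a ^ (e x).val)⁻¹) * a ^ (e (x * (a ^ (e x).val)⁻¹)).val = x := by
    intro x
    rw [he_mul, he_inv, he_apow, neg_zero, add_zero, inv_mul_cancel_right]
  refine ⟨{ toFun := fun x => x * a ^ (e x).val
            invFun := fun x => x * (a ^ (e x).val)⁻¹
            left_inv := fun x => hleft x
            right_inv := fun x => hright x
            map_mul' := fun x y => hmul x y }, ?_, ⟨x₀, ?_⟩⟩
  · show g * a ^ (e g).val = g
    rw [he_g, ZMod.val_zero, pow_zero, mul_one]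
  · show x₀ * a ^ (e x₀).val ≠ x₀
    intro hcon
    have h1 : a ^ (e x₀).val = 1 := mul_left_cancel (hcon.trans (mul_one x₀).symm)
    have hdvd : orderOf a ∣ (e x₀).val := orderOf_dvd_of_pow_eq_one h1
    rw [horda] at hdvd
    have hlt : (e x₀).val < p := ZMod.val_lt _
    have h0 : (e x₀).val = 0 := Nat.eq_zero_of_dvd_of_lt hdvd hlt
    exact he_x₀ ((ZMod.val_eq_zero _).mp h0)
end DetAux

theorem stmt12 {G : Type*} [Group G] [Finite G] (h2 : 2 ≤ Nat.card G) :
    detNumber G = 1 ↔ IsCyclic G ∧ 3 ≤ Nat.card G := by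
  rw [detNumber]
  set S : Set ℕ := {n | ∃ D : Finset G, D.card = n ∧ IsDetermining (D : Set G)} with hSdef
  constructor
  · intro h
    have hS : S.Nonempty := by
      by_contra h'
      rw [Set.not_nonempty_iff_eq_empty] at h'
      rw [h', Nat.sInf_empty] at h
      exact one_ne_zero h.symm
    have hmem : 1 ∈ S := h ▸ Nat.sInf_mem hS
    have h0 : 0 ∉ S := by
      intro h0
      have h1 : sInf S = 0 := Nat.le_zero.mp (Nat.sInf_le h0)
      rw [h] at h1
      exact one_ne_zero h1
    obtain ⟨D, hD1, hDdet⟩ := hmem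
    obtain ⟨g, rfl⟩ := Finset.card_eq_one.mp hD1
    have hdet : ∀ φ : G ≃* G, φ g = g → φ = MulEquiv.refl G := by
      intro φ hφ
      apply hDdet φ
      intro x hx
      rw [Finset.coe_singleton, Set.mem_singleton_iff] at hx
      rw [hx, hφ]
    have hnt : ∃ ψ : G ≃* G, ψ ≠ MulEquiv.refl G := by
      by_contra h'
      push_neg at h'
      exact h0 ⟨∅, Finset.card_empty, fun φ _ => h' φ⟩
    -- commutativity
    have hconj : ∀ h : G, h * g * h⁻¹ = g → ∀ x, h * x * h⁻¹ = x := by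
      intro h hh x
      have h1 : MulAut.conj h = MulEquiv.refl G := hdet (MulAut.conj h) (by
        simpa [MulAut.conj_apply] using hh)
      have h2 := DFunLike.congr_fun h1 x
      simpa [MulAut.conj_apply] using h2
    have hgc : ∀ x : G, g * x = x * g := by
      intro x
      have := hconj g (by group) x
      calc g * x = g * x * g⁻¹ * g := by group
        _ = x * g := by rw [this]
    have hcomm : ∀ x y : G, x * y = y * x := by
      intro x y
      have hx : x * g * x⁻¹ = g := by
        rw [← hgc x]; group
      have := hconj x hx y
      calc x * y = x * y * x⁻¹ * x := by group
        _ = y * x := by rw [this]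
    letI cg : CommGroup G := { (by infer_instance : Group G) with mul_comm := hcomm }
    have hcyc : IsCyclic G := by
      by_contra hnc
      obtain ⟨φ, hφg, x₁, hx₁⟩ := DetAux.exists_nontrivial_fixing hnc g
      apply hx₁
      rw [hdet φ hφg]
      rfl
    refine ⟨hcyc, ?_⟩
    by_contra h3
    push_neg at h3
    have hcard2 : Nat.card G = 2 := by omega
    obtain ⟨ψ, hψ⟩ := hnt
    apply hψ
    obtain ⟨y, hy1, hy2⟩ := (Nat.card_eq_two_iff' (1 : G)).mp hcard2
    ext x
    show ψ x = x
    rcases eq_or_ne x 1 with rfl | hx1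
    · exact map_one ψ
    · have hxy : x = y := hy2 x hx1
      subst hxy
      have hψx : ψ x ≠ 1 := fun hc => hx1 (by
        have := ψ.injective (hc.trans (map_one ψ).symm)
        exact this)
      exact hy2 (ψ x) hψx
  · rintro ⟨hc, h3⟩
    obtain ⟨g, hg⟩ := hc.exists_generator
    have h1mem : 1 ∈ S := by
      refine ⟨{g}, Finset.card_singleton g, ?_⟩
      intro φ hφ
      have hφg : φ g = g := hφ g (by simp)
      ext x
      obtain ⟨k, hk⟩ := Subgroup.mem_zpowers_iff.mp (hg x)
      show φ x = x
      rw [← hk, map_zpow, hφg]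
    have horder : orderOf g = Nat.card G := orderOf_eq_card_of_forall_mem_zpowers hg
    have hginv : g⁻¹ ≠ g := by
      intro hh
      have hgg : g ^ 2 = 1 := by
        rw [pow_two]
        nth_rewrite 1 [← hh]
        rw [inv_mul_cancel]
      have hdvd := orderOf_dvd_of_pow_eq_one hgg
      rw [horder] at hdvd
      have := Nat.le_of_dvd (by norm_num) hdvd
      omega
    have hcomm : ∀ x y : G, x * y = y * x := by
      intro x y
      obtain ⟨kx, hkx⟩ := Subgroup.mem_zpowers_iff.mp (hg x)
      obtain ⟨ky, hky⟩ := Subgroup.mem_zpowers_iff.mp (hg y)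
      rw [← hkx, ← hky, ← zpow_add, ← zpow_add, add_comm]
    set ψ : G ≃* G :=
      { toFun := fun x => x⁻¹
        invFun := fun x => x⁻¹
        left_inv := fun x => inv_inv x
        right_inv := fun x => inv_inv x
        map_mul' := fun x y => by
          show (x * y)⁻¹ = x⁻¹ * y⁻¹
          rw [mul_inv_rev, hcomm] } with hψdef
    have h0 : 0 ∉ S := by
      rintro ⟨D, hD0, hDdet⟩
      have hψr : ψ = MulEquiv.refl G := by
        apply hDdet ψ
        intro x hx
        rw [Finset.card_eq_zero.mp hD0] at hx
        simp at hx
      have := DFunLike.congr_fun hψr g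
      exact hginv this
    have hle : sInf S ≤ 1 := Nat.sInf_le h1mem
    have hne : sInf S ≠ 0 := fun hh => h0 (hh ▸ Nat.sInf_mem ⟨1, h1mem⟩)
    omega
end

section
/- If a finite group G has minimal number of generators equal to 2, then its determining number equals 2. -/
section Aux

open Subgroup

/-- In a finite noncyclic commutative group, for every `a` there is a prime `p` with
`p ∣ |G/⟨a⟩|` and `p² ∣ |G|`. -/
lemma exists_good_prime {G : Type*} [CommGroup G] [Finite G]
    (hnc : ∀ b : G, Subgroup.closure {b} ≠ ⊤) (a : G) :
    ∃ p : ℕ, p.Prime ∧ p ∣ Nat.card (G ⧸ Subgroup.closure ({a} : Set G)) ∧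
      p ^ 2 ∣ Nat.card G := by
  by_contra hcon
  push_neg at hcon
  set H : Subgroup G := Subgroup.closure ({a} : Set G) with hHdef
  have hcardG : Nat.card G ≠ 0 := Nat.card_pos.ne'
  have hcardQ : Nat.card (G ⧸ H) ≠ 0 := Nat.card_pos.ne'
  have hcardH : Nat.card H ≠ 0 := Nat.card_pos.ne'
  have hmul : Nat.card G = Nat.card (G ⧸ H) * Nat.card H :=
    Subgroup.card_eq_card_quotient_mul_card_subgroup H
  have hexp_ne : Monoid.exponent G ≠ 0 := Monoid.exponent_ne_zero_of_finite
  -- card G divides exponent G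
  have hdvd : Nat.card G ∣ Monoid.exponent G := by
    rw [← Nat.factorization_le_iff_dvd hcardG hexp_ne]
    intro p
    rcases Nat.eq_zero_or_pos ((Nat.card G).factorization p) with h0 | hpos
    · simp [h0]
    have hp : p.Prime := by
      have hmem : p ∈ (Nat.card G).factorization.support := Finsupp.mem_support_iff.mpr hpos.ne'
      rw [Nat.support_factorization] at hmem
      exact Nat.prime_of_mem_primeFactors hmem
    rw [← Nat.Prime.pow_dvd_iff_le_factorization hp hexp_ne]
    by_cases hpQ : p ∣ Nat.card (G ⧸ H)
    · -- then p² ∤ card G, so the multiplicity is 1 and Cauchy gives the element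
      have h2 : ¬ p ^ 2 ∣ Nat.card G := hcon p hp hpQ
      have hle : (Nat.card G).factorization p ≤ 1 := by
        by_contra hgt
        exact h2 ((Nat.Prime.pow_dvd_iff_le_factorization hp hcardG).mpr (by omega))
      have h1 : (Nat.card G).factorization p = 1 := le_antisymm hle hpos
      rw [h1, pow_one]
      have hpG : p ∣ Nat.card G := hpQ.trans ⟨Nat.card H, hmul⟩
      haveI : Fact p.Prime := ⟨hp⟩
      obtain ⟨g, hg⟩ := exists_prime_orderOf_dvd_card' (G := G) p hpG
      exact hg ▸ Monoid.order_dvd_exponent g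
    · -- p-part of card G comes from ⟨a⟩, cyclic
      have hfactQ : (Nat.card (G ⧸ H)).factorization p = 0 :=
        Nat.factorization_eq_zero_of_not_dvd hpQ
      have hfact : (Nat.card G).factorization p = (Nat.card H).factorization p := by
        rw [hmul, Nat.factorization_mul hcardQ hcardH]
        simp [hfactQ]
      have hcardHa : Nat.card H = orderOf a := by
        rw [hHdef, ← Subgroup.zpowers_eq_closure, Nat.card_zpowers]
      calc p ^ (Nat.card G).factorization p ∣ Nat.card H := by
            rw [hfact, hcardHa]
            exact hcardHa ▸ Nat.ordProj_dvd _ p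
        _ ∣ Monoid.exponent G := hcardHa ▸ Monoid.order_dvd_exponent a
  -- hence exponent = card and G is cyclic, contradiction
  have hexp_dvd : Monoid.exponent G ∣ Nat.card G := by
    haveI : Fintype G := Fintype.ofFinite G
    rw [Nat.card_eq_fintype_card]
    exact Group.exponent_dvd_card
  have heq : Monoid.exponent G = Nat.card G := Nat.dvd_antisymm hexp_dvd hdvd
  obtain ⟨g, hg⟩ := Monoid.exists_orderOf_eq_exponent (Monoid.ExponentExists.of_finite (G := G))
  have hord : orderOf g = Nat.card G := hg.trans heq
  have : Subgroup.zpowers g = ⊤ := by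
    apply Subgroup.eq_top_of_card_eq
    rw [Nat.card_zpowers, hord]
  exact hnc g (by rwa [Subgroup.zpowers_eq_closure] at this)

/-- In a finite noncyclic commutative group, every singleton fails to be determining:
there is a nontrivial automorphism fixing any given element. -/
lemma exists_nontrivial_aut_fixing {G : Type*} [CommGroup G] [Finite G]
    (hnc : ∀ b : G, Subgroup.closure {b} ≠ ⊤) (a : G) :
    ∃ φ : G ≃* G, φ ≠ MulEquiv.refl G ∧ φ a = a := by
  classical
  obtain ⟨p, hp, hpQ, hp2⟩ := exists_good_prime hnc a
  haveI : Fact p.Prime := ⟨hp⟩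
  haveI : NeZero p := ⟨hp.ne_zero⟩
  set H : Subgroup G := Subgroup.closure ({a} : Set G) with hHdef
  set P : Subgroup (G ⧸ H) := (powMonoidHom p : (G ⧸ H) →* (G ⧸ H)).range with hPdef
  -- Q2 is a nontrivial group of exponent p
  have hpow_one : ∀ y : (G ⧸ H) ⧸ P, y ^ p = 1 := by
    intro y
    induction y using QuotientGroup.induction_on with
    | _ q =>
      rw [← QuotientGroup.mk_pow, QuotientGroup.eq_one_iff]
      exact ⟨q, rfl⟩
  have hQ2ne : ∃ y : (G ⧸ H) ⧸ P, y ≠ 1 := by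
    by_contra hall
    push_neg at hall
    have hsurj : Function.Surjective (powMonoidHom p : (G ⧸ H) →* (G ⧸ H)) := by
      intro q
      have : (QuotientGroup.mk q : (G ⧸ H) ⧸ P) = 1 := hall _
      rw [QuotientGroup.eq_one_iff] at this
      exact this
    have hinj : Function.Injective (powMonoidHom p : (G ⧸ H) →* (G ⧸ H)) :=
      Finite.injective_iff_surjective.mpr hsurj
    obtain ⟨q0, hq0⟩ := exists_prime_orderOf_dvd_card' (G := G ⧸ H) p hpQ
    have hq0p : q0 ^ p = 1 := by rw [← hq0]; exact pow_orderOf_eq_one q0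
    have : q0 = 1 := hinj (a₂ := 1) (by simpa [powMonoidHom_apply] using hq0p)
    rw [this, orderOf_one] at hq0
    exact hp.one_lt.ne' hq0.symm
  -- the additive version of Q2 is a ZMod p vector space
  haveI : Module (ZMod p) (Additive ((G ⧸ H) ⧸ P)) := AddCommGroup.zmodModule (n := p) (by
    intro x
    have h1 : Additive.toMul x ^ p = 1 := hpow_one _
    have h2 := congrArg Additive.ofMul h1
    rw [ofMul_pow] at h2
    simpa using h2)
  obtain ⟨y0, hy0⟩ := hQ2ne
  have hv0 : (Additive.ofMul y0 : Additive ((G ⧸ H) ⧸ P)) ≠ 0 := by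
    simpa using hy0
  -- a nonzero functional
  obtain ⟨ℓ0, hℓ0⟩ : ∃ ℓ0 : Additive ((G ⧸ H) ⧸ P) →ₗ[ZMod p] ZMod p, ℓ0 (Additive.ofMul y0) ≠ 0 := by
    by_contra hall
    push_neg at hall
    exact hv0 ((Module.forall_dual_apply_eq_zero_iff (ZMod p) _).mp hall)
  -- the composite homomorphism L : G → ZMod p
  set L : G → ZMod p := fun x =>
    ℓ0 (Additive.ofMul ((QuotientGroup.mk (QuotientGroup.mk x : G ⧸ H) : (G ⧸ H) ⧸ P))) with hLdef
  have Ladd : ∀ x y : G, L (x * y) = L x + L y := by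
    intro x y
    show ℓ0 _ = ℓ0 _ + ℓ0 _
    rw [← map_add]
    congr 1
  have L1 : L 1 = 0 := by
    have := Ladd 1 1
    rw [mul_one] at this
    exact (left_eq_add.mp this)
  set f : G →* Multiplicative (ZMod p) :=
    { toFun := fun x => Multiplicative.ofAdd (L x)
      map_one' := by simp [L1]
      map_mul' := by intro x y; simp [Ladd, ofAdd_add] } with hfdef
  have hfL : ∀ x : G, L x = Multiplicative.toAdd (f x) := fun x => rfl
  have La : L a = 0 := by
    have ha : (QuotientGroup.mk a : G ⧸ H) = 1 := by
      rw [QuotientGroup.eq_one_iff]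
      exact Subgroup.subset_closure (Set.mem_singleton a)
    show ℓ0 _ = 0
    rw [ha]
    simp
  obtain ⟨x0, hx0⟩ : ∃ x0 : G, L x0 ≠ 0 := by
    obtain ⟨q1, hq1⟩ := QuotientGroup.mk_surjective (s := P) y0
    obtain ⟨x1, hx1⟩ := QuotientGroup.mk_surjective (s := H) q1
    refine ⟨x1, ?_⟩
    show ℓ0 _ ≠ 0
    rw [hx1, hq1]
    exact hℓ0
  -- an element of order p in the kernel of L
  have hker : p ∣ Nat.card f.ker := by
    have hcard : Nat.card G = Nat.card f.range * Nat.card f.ker := by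
      rw [Subgroup.card_eq_card_quotient_mul_card_subgroup f.ker]
      congr 1
      exact Nat.card_congr (QuotientGroup.quotientKerEquivRange f).toEquiv
    have hrange : Nat.card f.range ∣ p := by
      have := Subgroup.card_subgroup_dvd_card f.range
      rwa [Nat.card_eq_fintype_card (α := Multiplicative (ZMod p)),
        Fintype.card_multiplicative, ZMod.card] at this
    rcases (Nat.Prime.eq_one_or_self_of_dvd hp _ hrange) with h1 | h1
    · have : p ^ 2 ∣ Nat.card f.ker := by
        rwa [hcard, h1, one_mul] at hp2
      exact (dvd_pow_self p two_ne_zero).trans this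
    · have : p * p ∣ p * Nat.card f.ker := by
        have := hp2
        rwa [hcard, h1, pow_two] at this
      exact (Nat.mul_dvd_mul_iff_left hp.pos).mp this
  obtain ⟨t', ht'⟩ := exists_prime_orderOf_dvd_card' (G := f.ker) p hker
  set t : G := (t' : G) with htdef
  have ht : orderOf t = p := by rw [htdef, Subgroup.orderOf_coe, ht']
  have hLt : ∀ n : ℕ, L (t ^ n) = 0 := by
    intro n
    have htker : f t = 1 := t'.2
    rw [hfL, map_pow, htker, one_pow]
    rfl
  have hLmul : ∀ (x : G) (n : ℕ), L (x * t ^ n) = L x := by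
    intro x n
    rw [Ladd, hLt, add_zero]
  -- the key power computation
  have hpow : ∀ u v : ZMod p, t ^ (u + v).val = t ^ u.val * t ^ v.val := by
    intro u v
    have hmod : ∀ m : ℕ, t ^ (m % p) = t ^ m := by
      intro m; rw [← ht]; exact pow_mod_orderOf t m
    rw [ZMod.val_add, hmod, pow_add]
  -- construct the automorphism
  refine ⟨{ toFun := fun x => x * t ^ (L x).val
            invFun := fun x => x * t ^ (-(L x)).val
            left_inv := ?_
            right_inv := ?_
            map_mul' := ?_ }, ?_, ?_⟩
  · intro x
    show x * t ^ (L x).val * t ^ (-(L (x * t ^ (L x).val))).val = x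
    rw [hLmul, mul_assoc, ← hpow, add_neg_cancel, ZMod.val_zero, pow_zero, mul_one]
  · intro x
    show x * t ^ (-(L x)).val * t ^ (L (x * t ^ (-(L x)).val)).val = x
    rw [hLmul, mul_assoc, ← hpow, neg_add_cancel, ZMod.val_zero, pow_zero, mul_one]
  · intro x y
    show (x * y) * t ^ (L (x * y)).val = (x * t ^ (L x).val) * (y * t ^ (L y).val)
    rw [Ladd, hpow, mul_mul_mul_comm]
  · -- nontrivial
    intro heq
    have hx0fix : x0 * t ^ (L x0).val = x0 := by
      have := congrArg (fun ψ : G ≃* G => ψ x0) heq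
      simpa using this
    have hpow1 : t ^ (L x0).val = 1 := by
      rwa [mul_eq_left] at hx0fix
    have hdvd : p ∣ (L x0).val := by
      have := orderOf_dvd_of_pow_eq_one hpow1
      rwa [ht] at this
    have hlt : (L x0).val < p := ZMod.val_lt _
    have hne : (L x0).val ≠ 0 := fun h => hx0 ((ZMod.val_eq_zero _).mp h)
    have := Nat.le_of_dvd (Nat.pos_of_ne_zero hne) hdvd
    omega
  · -- fixes a
    show a * t ^ (L a).val = a
    rw [La, ZMod.val_zero, pow_zero, mul_one]

end Aux

theorem stmt13 {G : Type*} [Group G] [Finite G] (h : genNumber G = 2) :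
    detNumber G = 2 := by
  classical
  set Sgen := {n | ∃ D : Finset G, D.card = n ∧ Subgroup.closure (D : Set G) = ⊤} with hSgen
  have hS2 : sInf Sgen = 2 := h
  have hSne : Sgen.Nonempty := by
    by_contra hne
    rw [Set.not_nonempty_iff_eq_empty] at hne
    rw [hne, Nat.sInf_empty] at hS2
    exact two_ne_zero hS2.symm
  have h2mem : 2 ∈ Sgen := by
    have := Nat.sInf_mem hSne
    rwa [hS2] at this
  have hlow : ∀ n ∈ Sgen, 2 ≤ n := fun n hn => hS2 ▸ Nat.sInf_le hn
  obtain ⟨D, hD2, hDtop⟩ := h2mem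
  -- a generating set is determining
  have hdet2 : IsDetermining (D : Set G) := by
    intro φ hfix
    have hall : ∀ g : G, φ g = g := by
      intro g
      have hg : g ∈ Subgroup.closure (D : Set G) := hDtop ▸ Subgroup.mem_top g
      induction hg using Subgroup.closure_induction with
      | mem x hx => exact hfix x hx
      | one => exact map_one φ
      | mul x y hx hy ihx ihy => rw [map_mul, ihx, ihy]
      | inv x hx ihx => rw [map_inv, ihx]
    exact MulEquiv.ext hall
  have h2det : 2 ∈ {n | ∃ D : Finset G, D.card = n ∧ IsDetermining (D : Set G)} :=
    ⟨D, hD2, hdet2⟩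
  -- no small determining sets
  have hnosmall : ∀ n ∈ {n | ∃ D : Finset G, D.card = n ∧ IsDetermining (D : Set G)}, 2 ≤ n := by
    rintro n ⟨E, hEcard, hEdet⟩
    by_contra hlt
    push_neg at hlt
    -- extract a single fixing element
    obtain ⟨a, hfixa⟩ : ∃ a : G, ∀ φ : G ≃* G, φ a = a → φ = MulEquiv.refl G := by
      interval_cases n
      · refine ⟨1, fun φ _ => hEdet φ ?_⟩
        rw [Finset.card_eq_zero] at hEcard
        simp [hEcard]
      · rw [Finset.card_eq_one] at hEcard
        obtain ⟨b, rfl⟩ := hEcard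
        refine ⟨b, fun φ hφ => hEdet φ ?_⟩
        intro x hx
        rw [Finset.coe_singleton, Set.mem_singleton_iff] at hx
        rw [hx]; exact hφ
    -- G is commutative
    have hacentral : ∀ x : G, a * x = x * a := by
      intro x
      have h1 : (MulAut.conj a : G ≃* G) = MulEquiv.refl G := by
        apply hfixa
        simp [MulAut.conj_apply]
      have := congrArg (fun ψ : G ≃* G => ψ x) h1
      simp only [MulAut.conj_apply, MulEquiv.refl_apply] at this
      rw [mul_inv_eq_iff_eq_mul] at this
      exact this
    have hcomm : ∀ x y : G, x * y = y * x := by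
      intro x y
      have h1 : (MulAut.conj x : G ≃* G) = MulEquiv.refl G := by
        apply hfixa
        simp only [MulAut.conj_apply]
        rw [mul_inv_eq_iff_eq_mul]
        exact (hacentral x).symm
      have := congrArg (fun ψ : G ≃* G => ψ y) h1
      simp only [MulAut.conj_apply, MulEquiv.refl_apply] at this
      rw [mul_inv_eq_iff_eq_mul] at this
      exact this
    letI : CommGroup G := { (inferInstance : Group G) with mul_comm := hcomm }
    -- G is noncyclic
    have hnc : ∀ b : G, Subgroup.closure ({b} : Set G) ≠ ⊤ := by
      intro b htop
      have hmem : 1 ∈ Sgen := ⟨{b}, Finset.card_singleton b, by rwa [Finset.coe_singleton]⟩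
      have := hlow 1 hmem
      omega
    obtain ⟨φ, hφne, hφa⟩ := exists_nontrivial_aut_fixing hnc a
    exact hφne (hfixa φ hφa)
  apply le_antisymm
  · exact Nat.sInf_le h2det
  · exact le_csInf ⟨2, h2det⟩ hnosmall
end

section
/- Let G be a finite group, p a prime, and M a normal subgroup of index p in G such that M ∩ Z(G) contains an element of order p. Then G has a non-identity automorphism that fixes every element of M. -/
theorem stmt14 {G : Type*} [Group G] [Finite G] (p : ℕ) (hp : p.Prime)
    (M : Subgroup G) [M.Normal] (hidx : M.index = p)
    (hz : ∃ z : G, z ∈ M ⊓ Subgroup.center G ∧ orderOf z = p) :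
    ∃ φ : G ≃* G, φ ≠ MulEquiv.refl G ∧ ∀ x ∈ M, φ x = x := by
  obtain ⟨z, hzMc, hzo⟩ := hz
  have hzM : z ∈ M := hzMc.1
  have hzc : z ∈ Subgroup.center G := hzMc.2
  have hz1 : z ≠ 1 := by
    intro h
    rw [h, orderOf_one] at hzo
    exact hp.one_lt.ne' hzo.symm
  set n := Nat.card (G ⧸ M) with hn
  have hnp : n = p := hidx
  have : Fact p.Prime := ⟨hp⟩
  have hcyc : IsCyclic (G ⧸ M) := isCyclic_of_prime_card (hn ▸ hnp)
  -- the `z`-powers map `ZMod n →+ Additive G`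
  have hker : (zmultiplesHom (Additive G) (Additive.ofMul z)) (n : ℤ) = 0 := by
    show ((n : ℤ) • Additive.ofMul z) = 0
    have : z ^ (n : ℤ) = 1 := by
      rw [hnp, zpow_natCast, ← hzo, pow_orderOf_eq_one]
    exact this
  let f : ZMod n →+ Additive G :=
    ZMod.lift n ⟨zmultiplesHom (Additive G) (Additive.ofMul z), hker⟩
  let ι : Multiplicative (ZMod n) →* G := AddMonoidHom.toMultiplicativeLeft f
  have hι : ∀ k : ℤ, ι (Multiplicative.ofAdd ((k : ℤ) : ZMod n)) = z ^ k := by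
    intro k
    show Additive.toMul (f ((k : ℤ) : ZMod n)) = z ^ k
    rw [show f ((k : ℤ) : ZMod n) = k • Additive.ofMul z from ZMod.lift_coe n _ k]
    simp
  have hιz : ∀ a : Multiplicative (ZMod n), ι a ∈ Subgroup.zpowers z := by
    intro a
    obtain ⟨k, hk⟩ := ZMod.intCast_surjective (Multiplicative.toAdd a)
    have ha : a = Multiplicative.ofAdd ((k : ℤ) : ZMod n) := by simp [hk]
    rw [ha, hι]
    exact ⟨k, rfl⟩
  let e : Multiplicative (ZMod n) ≃* (G ⧸ M) := zmodCyclicMulEquiv hcyc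
  let χ : G →* G := ι.comp (e.symm.toMonoidHom.comp (QuotientGroup.mk' M))
  have hχz : ∀ x : G, χ x ∈ Subgroup.zpowers z := fun x => hιz _
  have hχc : ∀ x y : G, χ x * y = y * χ x := by
    intro x y
    obtain ⟨k, hk⟩ := hχz x
    rw [← hk]
    have hcz : Commute z y := (Subgroup.mem_center_iff.mp hzc y).symm
    exact (hcz.zpow_left k).eq
  have hχM : ∀ x ∈ M, χ x = 1 := by
    intro x hx
    show ι (e.symm ((QuotientGroup.mk' M) x)) = 1
    have h1 : (QuotientGroup.mk' M) x = 1 := (QuotientGroup.eq_one_iff x).mpr hx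
    rw [h1]
    simp
  have hχχ : ∀ x : G, χ (χ x) = 1 := by
    intro x
    apply hχM
    obtain ⟨k, hk⟩ := hχz x
    rw [← hk]
    exact M.zpow_mem hzM k
  let φ : G ≃* G :=
  { toFun := fun x => x * χ x
    invFun := fun x => x * (χ x)⁻¹
    left_inv := by
      intro x
      simp only [map_mul, hχχ x, mul_one, mul_inv_rev]
      rw [mul_assoc, mul_inv_cancel, mul_one]
    right_inv := by
      intro x
      simp only [map_mul, map_inv, hχχ x, inv_one, mul_one]
      rw [mul_assoc, inv_mul_cancel, mul_one]
    map_mul' := by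
      intro x y
      simp only [map_mul]
      rw [mul_assoc x (χ x), show χ x * (y * χ y) = y * (χ x * χ y) by
        rw [← mul_assoc, hχc, mul_assoc], ← mul_assoc, ← mul_assoc, mul_assoc (x*y)] }
  obtain ⟨g, hg⟩ := QuotientGroup.mk'_surjective M (e (Multiplicative.ofAdd (1 : ZMod n)))
  have hχg : χ g = z := by
    show ι (e.symm ((QuotientGroup.mk' M) g)) = z
    rw [hg, e.symm_apply_apply]
    have h1 := hι 1
    simpa using h1
  refine ⟨φ, ?_, ?_⟩
  · intro h
    have hfix : φ g = g := by rw [h]; rfl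
    have : g * z = g := by
      rw [← hχg]
      exact hfix
    exact hz1 (by simpa using mul_left_cancel (a := g) (by rw [this, mul_one]))
  · intro x hx
    show x * χ x = x
    rw [hχM x hx, mul_one]
end

section
/- Every finite p-group of order at least 3 satisfies α(G) = γ(G), i.e., its determining number equals its minimal number of generators. -/
open Subgroup

/-- In a finite `p`-group of order at least 3, every proper subgroup is fixed
pointwise by some nontrivial automorphism. -/
lemma aux_exists_aut {G : Type*} [Group G] [Finite G] (p : ℕ) (hp : p.Prime)
    (hpG : IsPGroup p G) (h3 : 3 ≤ Nat.card G) {H : Subgroup G} (hH : H ≠ ⊤) :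
    ∃ φ : G ≃* G, (∀ x ∈ H, φ x = x) ∧ φ ≠ MulEquiv.refl G := by
  haveI := Fact.mk hp
  obtain htop | ⟨M, hM, hHM⟩ := eq_top_or_exists_le_coatom H
  · exact absurd htop hH
  haveI : Group.IsNilpotent G := hpG.isNilpotent
  haveI hMnorm : M.Normal :=
    NormalizerCondition.normal_of_coatom M (normalizerCondition_of_isNilpotent (G := G)) hM
  by_cases hMbot : M = ⊥
  · -- `G` has prime order `p ≥ 3`; use the inversion automorphism.
    have hnt : Nontrivial G := by
      have : 1 < Nat.card G := by omega
      exact Finite.one_lt_card_iff_nontrivial.mp this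
    have hdvd : p ∣ Nat.card G := by
      obtain ⟨n, hn0, hn⟩ := hpG.nontrivial_iff_card.mp hnt
      exact hn ▸ dvd_pow_self p hn0.ne'
    obtain ⟨g, hg⟩ := exists_prime_orderOf_dvd_card' (G := G) p hdvd
    have hgne : g ≠ 1 := by
      intro h; rw [h, orderOf_one] at hg; exact hp.one_lt.ne' hg.symm
    have hzg : zpowers g = ⊤ := by
      refine hM.2 _ ?_
      rw [hMbot]
      exact bot_lt_iff_ne_bot.mpr (fun h => hgne ((zpowers_eq_bot).mp h))
    have hcard : Nat.card G = p := by
      rw [← card_top (G := G), ← hzg, Nat.card_zpowers, hg]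
    have hcomm : ∀ a b : G, a * b = b * a := by
      intro a b
      obtain ⟨m, hm⟩ := (hzg ▸ mem_top a : a ∈ zpowers g)
      obtain ⟨n, hn⟩ := (hzg ▸ mem_top b : b ∈ zpowers g)
      rw [← hm, ← hn, ← zpow_add, ← zpow_add, add_comm]
    refine ⟨⟨Equiv.inv G, fun a b => by simp [mul_inv_rev, hcomm]⟩, ?_, ?_⟩
    · intro x hx
      have : x ∈ (⊥ : Subgroup G) := hMbot ▸ hHM hx
      simp [Subgroup.mem_bot.mp this]
    · intro h
      have h2 : g⁻¹ = g := by
        have := congrArg (fun ψ : G ≃* G => ψ g) h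
        simpa using this
      have h4 : g ^ 2 = 1 := by
        rw [pow_two]; nth_rewrite 1 [← h2]; exact inv_mul_cancel g
      have hdvd2 : p ∣ 2 := hg ▸ orderOf_dvd_of_pow_eq_one h4
      have h5 : 3 ≤ p := hcard ▸ h3
      have := Nat.le_of_dvd (by norm_num) hdvd2
      omega
  · -- `M` is a nontrivial proper normal subgroup of index `p`.
    -- Step 1: find a central element `z ∈ M` of order `p`.
    haveI hntM : Nontrivial M := (nontrivial_iff_ne_bot M).mpr hMbot
    have hpConj : IsPGroup p (ConjAct G) := hpG.of_equiv ConjAct.toConjAct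
    have hdvdM : p ∣ Nat.card M := by
      obtain ⟨n, hn0, hn⟩ := (hpG.to_subgroup M).nontrivial_iff_card.mp hntM
      exact hn ▸ dvd_pow_self p hn0.ne'
    have hone : (1 : M) ∈ MulAction.fixedPoints (ConjAct G) M := by
      intro g
      apply Subtype.ext
      rw [ConjAct.Subgroup.val_conj_smul]
      simp
    obtain ⟨b, hbfix, hb1⟩ :=
      hpConj.exists_fixed_point_of_prime_dvd_card_of_fixed_point (M : Type _) hdvdM hone
    have hbC : (b : G) ∈ center G := by
      rw [Subgroup.mem_center_iff]
      intro g
      have := congrArg Subtype.val (hbfix (ConjAct.toConjAct g))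
      rw [ConjAct.Subgroup.val_conj_smul, ConjAct.toConjAct_smul] at this
      calc g * (b : G) = g * b * g⁻¹ * g := by group
        _ = (b : G) * g := by rw [this]
    set K : Subgroup G := center G ⊓ M with hK
    have hbK : (b : G) ∈ K := ⟨hbC, b.2⟩
    haveI hntK : Nontrivial K := by
      refine ⟨⟨b, hbK⟩, 1, ?_⟩
      intro h
      have hval : (b : G) = 1 := congrArg Subtype.val h
      exact hb1 (Subtype.ext hval.symm)
    have hdvdK : p ∣ Nat.card K := by
      obtain ⟨n, hn0, hn⟩ := (hpG.to_subgroup K).nontrivial_iff_card.mp hntK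
      exact hn ▸ dvd_pow_self p hn0.ne'
    obtain ⟨z0, hz0⟩ := exists_prime_orderOf_dvd_card' (G := K) p hdvdK
    set z : G := (z0 : G) with hzdef
    have hz : orderOf z = p := by rw [hzdef, orderOf_coe, hz0]
    have hzC : z ∈ center G := z0.2.1
    have hzM : z ∈ M := z0.2.2
    -- Step 2: the quotient `G ⧸ M` has order `p`.
    have hntQ : Nontrivial (G ⧸ M) := by
      obtain ⟨x, hx⟩ := (not_forall.mp (fun h => hM.1 ((eq_top_iff' M).mpr h)))
      exact ⟨QuotientGroup.mk x, 1, fun h => hx ((QuotientGroup.eq_one_iff x).mp h)⟩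
    have hdvdQ : p ∣ Nat.card (G ⧸ M) := by
      obtain ⟨n, hn0, hn⟩ := (hpG.to_quotient M).nontrivial_iff_card.mp hntQ
      exact hn ▸ dvd_pow_self p hn0.ne'
    obtain ⟨q, hq⟩ := exists_prime_orderOf_dvd_card' (G := G ⧸ M) p hdvdQ
    have hqtop : zpowers q = ⊤ := by
      have hle : M ≤ comap (QuotientGroup.mk' M) (zpowers q) := by
        conv_lhs => rw [← QuotientGroup.ker_mk' M]
        exact ker_le_comap (f := QuotientGroup.mk' M) (zpowers q)
      have hlt : M < comap (QuotientGroup.mk' M) (zpowers q) := by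
        refine lt_of_le_of_ne hle ?_
        intro heq
        have hle' : comap (QuotientGroup.mk' M) (zpowers q) ≤ M := le_of_eq heq.symm
        obtain ⟨x, hx⟩ := QuotientGroup.mk'_surjective M q
        have hxmem : x ∈ comap (QuotientGroup.mk' M) (zpowers q) := by
          rw [mem_comap, hx]
          exact mem_zpowers q
        have : q = 1 := by
          rw [← hx]
          exact (QuotientGroup.eq_one_iff x).mpr (hle' hxmem)
        rw [this, orderOf_one] at hq
        exact hp.one_lt.ne' hq.symm
      have htop := hM.2 _ hlt
      have := congrArg (Subgroup.map (QuotientGroup.mk' M)) htop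
      rwa [map_comap_eq_self_of_surjective (QuotientGroup.mk'_surjective M),
        map_top_of_surjective _ (QuotientGroup.mk'_surjective M)] at this
    have hcardQ : Nat.card (G ⧸ M) = p := by
      rw [← card_top (G := G ⧸ M), ← hqtop, Nat.card_zpowers, hq]
    -- Step 3: build the automorphism `g ↦ g * f g` for a suitable `f : G →* G`.
    haveI : IsCyclic (G ⧸ M) := isCyclic_of_prime_card hcardQ
    have hcardz : Nat.card (zpowers z) = p := by rw [Nat.card_zpowers, hz]
    haveI : IsCyclic (zpowers z) := isCyclic_of_prime_card hcardz
    let χ : G ⧸ M ≃* zpowers z := mulEquivOfCyclicCardEq (by rw [hcardQ, hcardz])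
    let f : G →* G :=
      ((zpowers z).subtype.comp χ.toMonoidHom).comp (QuotientGroup.mk' M)
    have hfM : ∀ x ∈ M, f x = 1 := by
      intro x hx
      have : QuotientGroup.mk' M x = 1 := (QuotientGroup.eq_one_iff x).mpr hx
      simp only [f, MonoidHom.comp_apply, this, map_one, coe_subtype, OneMemClass.coe_one]
    have hfmem : ∀ g : G, f g ∈ zpowers z := fun g => (χ (QuotientGroup.mk' M g)).2
    have hfC : ∀ g : G, f g ∈ center G := fun g => (zpowers_le.mpr hzC) (hfmem g)
    have hfMmem : ∀ g : G, f g ∈ M := fun g => (zpowers_le.mpr hzM) (hfmem g)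
    obtain ⟨x, hxM⟩ := not_forall.mp (fun h => hM.1 ((eq_top_iff' M).mpr h))
    have hfx : f x ≠ 1 := by
      intro h
      have h1 : ((χ (QuotientGroup.mk' M x) : zpowers z) : G) = 1 := h
      have h2 : χ (QuotientGroup.mk' M x) = 1 := Subtype.ext h1
      have h3 : QuotientGroup.mk' M x = 1 := by
        have := congrArg χ.symm h2
        rwa [MulEquiv.symm_apply_apply, map_one] at this
      exact hxM ((QuotientGroup.eq_one_iff x).mp h3)
    let Φ : G →* G :=
      { toFun := fun g => g * f g
        map_one' := by simp
        map_mul' := fun a b => by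
          have h := (Subgroup.mem_center_iff.mp (hfC a)) b
          simp only [map_mul]
          rw [mul_assoc a b, ← mul_assoc b (f a), h, mul_assoc (f a), ← mul_assoc a (f a)] }
    have hΦinj : Function.Injective Φ := by
      rw [injective_iff_map_eq_one]
      intro g hg
      have hg' : g * f g = 1 := hg
      have hgM : g ∈ M := by
        have : g = (f g)⁻¹ := by
          rw [eq_inv_iff_mul_eq_one]; exact hg'
        rw [this]
        exact inv_mem (hfMmem g)
      have : f g = 1 := hfM g hgM
      rw [this, mul_one] at hg'
      exact hg'
    let φ : G ≃* G := MulEquiv.ofBijective Φ (Finite.injective_iff_bijective.mp hΦinj)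
    have hφ : ∀ g : G, φ g = g * f g := fun g => rfl
    refine ⟨φ, ?_, ?_⟩
    · intro y hy
      rw [hφ, hfM y (hHM hy), mul_one]
    · intro h
      apply hfx
      have := congrArg (fun ψ : G ≃* G => ψ x) h
      simp only [MulEquiv.refl_apply] at this
      rw [hφ] at this
      exact (mul_eq_left).mp this

/-- For finite `p`-groups of order at least 3, a finite set is determining iff it generates. -/
lemma aux_det_iff_gen {G : Type*} [Group G] [Finite G] (p : ℕ) (hp : p.Prime)
    (hpG : IsPGroup p G) (h3 : 3 ≤ Nat.card G) (D : Finset G) :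
    IsDetermining (D : Set G) ↔ Subgroup.closure (D : Set G) = ⊤ := by
  constructor
  · intro hdet
    by_contra hne
    obtain ⟨φ, hfix, hφ⟩ := aux_exists_aut p hp hpG h3 hne
    exact hφ (hdet φ (fun x hx => hfix x (subset_closure hx)))
  · intro hgen φ hfix
    ext g
    have hg : g ∈ closure (D : Set G) := hgen ▸ mem_top g
    have hgfix : φ g = g :=
      closure_induction (fun x hx => hfix x hx) (map_one φ)
        (fun a b _ _ ha hb => by rw [map_mul, ha, hb])
        (fun a _ ha => by rw [map_inv, ha]) hg
    simpa using hgfix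

theorem stmt15 {G : Type*} [Group G] [Finite G] (p : ℕ) (hp : p.Prime)
    (hpG : IsPGroup p G) (h3 : 3 ≤ Nat.card G) :
    detNumber G = genNumber G := by
  unfold detNumber genNumber
  congr 1
  ext n
  simp only [Set.mem_setOf_eq]
  constructor
  · rintro ⟨D, hcard, hD⟩
    exact ⟨D, hcard, (aux_det_iff_gen p hp hpG h3 D).mp hD⟩
  · rintro ⟨D, hcard, hD⟩
    exact ⟨D, hcard, (aux_det_iff_gen p hp hpG h3 D).mpr hD⟩
end

section
/- Let G be a finite abelian group, p an odd prime, and M a subgroup of index p in G. Then G has a non-identity automorphism that fixes every element of M. -/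
theorem stmt16 {G : Type*} [CommGroup G] [Finite G] (p : ℕ) (hp : p.Prime)
    (hodd : p ≠ 2) (M : Subgroup G) (hidx : M.index = p) :
    ∃ φ : G ≃* G, φ ≠ MulEquiv.refl G ∧ ∀ x ∈ M, φ x = x := by
  haveI : Fact p.Prime := ⟨hp⟩
  haveI : NeZero p := ⟨hp.ne_zero⟩
  -- the character χ : G →* Multiplicative (ZMod p)
  have hcardQ : Nat.card (G ⧸ M) = p := hidx
  have hcardZ : Nat.card (Multiplicative (ZMod p)) = p := by
    simp [Nat.card_eq_fintype_card]
  let e : (G ⧸ M) ≃* Multiplicative (ZMod p) := mulEquivOfPrimeCardEq hcardQ hcardZ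
  let χ : G →* Multiplicative (ZMod p) := e.toMonoidHom.comp (QuotientGroup.mk' M)
  have hχsurj : Function.Surjective χ :=
    e.surjective.comp (QuotientGroup.mk'_surjective M)
  have hχM : ∀ x ∈ M, χ x = 1 := by
    intro x hx
    have h1 : (QuotientGroup.mk' M) x = 1 := (QuotientGroup.eq_one_iff x).2 hx
    show e ((QuotientGroup.mk' M) x) = 1
    rw [h1, map_one]
  -- an element z of order dividing p with χ z ≠ -1 (additively), z ≠ 1
  obtain ⟨z0, hz0⟩ := exists_prime_orderOf_dvd_card' (G := G) p
    (hidx ▸ Subgroup.index_dvd_card M)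
  have hz0ne : z0 ≠ 1 := by
    intro h; rw [h, orderOf_one] at hz0; exact hp.one_lt.ne' hz0.symm
  obtain ⟨z, hzp, hzne, hzc⟩ : ∃ z : G, z ^ p = 1 ∧ z ≠ 1 ∧
      1 + Multiplicative.toAdd (χ z) ≠ 0 := by
    by_cases hc : 1 + Multiplicative.toAdd (χ z0) ≠ 0
    · exact ⟨z0, by rw [← hz0]; exact pow_orderOf_eq_one z0, hz0ne, hc⟩
    · push_neg at hc
      refine ⟨z0 ^ 2, by rw [← pow_mul, mul_comm, pow_mul, ← hz0,
        pow_orderOf_eq_one, one_pow], ?_, ?_⟩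
      · intro h
        have : orderOf z0 ∣ 2 := orderOf_dvd_of_pow_eq_one h
        rw [hz0] at this
        exact hodd ((Nat.prime_dvd_prime_iff_eq hp Nat.prime_two).1 this)
      · have : Multiplicative.toAdd (χ (z0 ^ 2)) = 2 * Multiplicative.toAdd (χ z0) := by
          simp [two_mul]
        rw [this]
        intro h
        have h2 : Multiplicative.toAdd (χ z0) = -1 := by linear_combination hc
        rw [h2] at h
        have : (1 : ZMod p) = 0 := by linear_combination -h
        exact one_ne_zero this
  -- the endomorphism x ↦ x * z ^ (χ x).val
  let f : G →* G :=
    { toFun := fun x => z ^ (Multiplicative.toAdd (χ x)).val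
      map_one' := by simp
      map_mul' := by
        intro a b
        show z ^ (Multiplicative.toAdd (χ (a * b))).val
            = z ^ (Multiplicative.toAdd (χ a)).val * z ^ (Multiplicative.toAdd (χ b)).val
        rw [← pow_add, map_mul, toAdd_mul, ZMod.val_add, ← pow_eq_pow_mod _ hzp] }
  let ψ : G →* G := MonoidHom.id G * f
  have hψ : ∀ x, ψ x = x * z ^ (Multiplicative.toAdd (χ x)).val := fun _ => rfl
  have hinj : Function.Injective ψ := by
    intro a b hab
    have h1 : ψ (a * b⁻¹) = 1 := by
      rw [map_mul, map_inv, hab, mul_inv_cancel]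
    set x := a * b⁻¹ with hxdef
    have hx : x * z ^ (Multiplicative.toAdd (χ x)).val = 1 := h1
    -- apply χ
    have hχx : χ x * (χ z) ^ (Multiplicative.toAdd (χ x)).val = 1 := by
      have := congrArg χ hx
      rwa [map_mul, map_pow, map_one] at this
    have hadd : Multiplicative.toAdd (χ x) + ((Multiplicative.toAdd (χ x)).val : ZMod p)
        * Multiplicative.toAdd (χ z) = 0 := by
      have h2 := congrArg Multiplicative.toAdd hχx
      rw [toAdd_mul, toAdd_pow, toAdd_one, nsmul_eq_mul] at h2
      exact h2
    rw [ZMod.natCast_val, ZMod.cast_id] at hadd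
    have hfac : Multiplicative.toAdd (χ x) * (1 + Multiplicative.toAdd (χ z)) = 0 := by
      linear_combination hadd
    have hx0 : Multiplicative.toAdd (χ x) = 0 := by
      rcases mul_eq_zero.1 hfac with h | h
      · exact h
      · exact absurd h hzc
    have : x = 1 := by
      rw [hx0] at hx
      simpa using hx
    rw [hxdef] at this
    exact mul_inv_eq_one.1 this
  have hbij : Function.Bijective ψ := Finite.injective_iff_bijective.1 hinj
  refine ⟨MulEquiv.ofBijective ψ hbij, ?_, ?_⟩
  · intro h
    obtain ⟨x, hx⟩ := hχsurj (Multiplicative.ofAdd 1)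
    have hψx : ψ x = x := by
      have := congrArg (fun (g : G ≃* G) => g x) h
      simpa using this
    rw [hψ, hx] at hψx
    have : z ^ (1 : ZMod p).val = 1 := by
      simpa using hψx
    rw [ZMod.val_one_eq_one_mod] at this
    rw [Nat.mod_eq_of_lt hp.one_lt, pow_one] at this
    exact hzne this
  · intro x hx
    show ψ x = x
    rw [hψ, hχM x hx]
    simp
end

section
/- Every finite abelian group of order at least 3 satisfies α(G) = γ(G). -/
section Helpers
variable {G : Type*} [CommGroup G]

def powZModHom (p : ℕ) [NeZero p] (z : G) (hz : z ^ p = 1) :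
    Multiplicative (ZMod p) →* G where
  toFun x := z ^ (Multiplicative.toAdd x).val
  map_one' := by simp
  map_mul' x y := by
    have hd : orderOf z ∣ p := orderOf_dvd_of_pow_eq_one hz
    rw [← pow_add]
    refine pow_eq_pow_iff_modEq.mpr (Nat.ModEq.of_dvd hd ?_)
    show (Multiplicative.toAdd (x * y)).val ≡ _ [MOD p]
    rw [toAdd_mul, ZMod.val_add]
    exact Nat.mod_modEq _ p

@[simp] lemma powZModHom_apply (p : ℕ) [NeZero p] (z : G) (hz : z ^ p = 1)
    (x : Multiplicative (ZMod p)) :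
    powZModHom p z hz x = z ^ (Multiplicative.toAdd x).val := rfl

variable [Finite G]

lemma aut_false {p : ℕ} (hp : p.Prime) (χ : G →* Multiplicative (ZMod p)) {D : Set G}
    (hdet : IsDetermining D) (hD : ∀ d ∈ D, χ d = 1) (hχ : χ ≠ 1)
    {z : G} (hzp : z ^ p = 1) (hz1 : z ≠ 1)
    (hc : (1 : ZMod p) + Multiplicative.toAdd (χ z) ≠ 0) : False := by
  haveI : Fact p.Prime := ⟨hp⟩
  haveI : NeZero p := ⟨hp.ne_zero⟩
  set f : G →* G := MonoidHom.id G * (powZModHom p z hzp).comp χ with hfdef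
  have hfx : ∀ x, f x = x * z ^ (Multiplicative.toAdd (χ x)).val := fun x => rfl
  have hinj : Function.Injective f := by
    rw [injective_iff_map_eq_one]
    intro x hx
    have h1 : χ (f x) = 1 := by rw [hx, map_one]
    have h2 : Multiplicative.toAdd (χ x) * (1 + Multiplicative.toAdd (χ z)) = 0 := by
      have h1' := congrArg Multiplicative.toAdd h1
      rw [hfx, map_mul, map_pow, toAdd_mul, toAdd_pow, toAdd_one] at h1'
      rw [nsmul_eq_mul, ZMod.natCast_val, ZMod.cast_id] at h1'
      linear_combination h1'
    have h3 : Multiplicative.toAdd (χ x) = 0 := by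
      rcases mul_eq_zero.mp h2 with h | h
      · exact h
      · exact absurd h hc
    have h4 : z ^ (Multiplicative.toAdd (χ x)).val = 1 := by rw [h3]; simp
    rwa [hfx, h4, mul_one] at hx
  have hbij := Finite.injective_iff_bijective.mp hinj
  set φ : G ≃* G := MulEquiv.ofBijective f hbij with hφdef
  have hφ : ∀ x, φ x = f x := fun x => rfl
  have hfixD : ∀ d ∈ D, φ d = d := by
    intro d hd
    rw [hφ, hfx, hD d hd]
    simp
  have heq := hdet φ hfixD
  obtain ⟨x0, hx0⟩ : ∃ x, χ x ≠ 1 := by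
    by_contra h
    push_neg at h
    exact hχ (MonoidHom.ext fun x => h x)
  have hid : φ x0 = x0 := by rw [heq]; rfl
  rw [hφ, hfx] at hid
  have hz' : z ^ (Multiplicative.toAdd (χ x0)).val = 1 := mul_eq_left.mp hid
  have hord : orderOf z = p := orderOf_eq_prime hzp hz1
  have hdvd : orderOf z ∣ (Multiplicative.toAdd (χ x0)).val := orderOf_dvd_of_pow_eq_one hz'
  rw [hord] at hdvd
  have hlt : (Multiplicative.toAdd (χ x0)).val < p := ZMod.val_lt _
  have hne : (Multiplicative.toAdd (χ x0)).val ≠ 0 := by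
    intro h
    apply hx0
    have : Multiplicative.toAdd (χ x0) = 0 := (ZMod.val_eq_zero _).mp h
    have := congrArg Multiplicative.ofAdd this
    simpa using this
  have := Nat.le_of_dvd (Nat.pos_of_ne_zero hne) hdvd
  omega
end Helpers

lemma odd_char_false {G : Type*} [CommGroup G] [Finite G] {p : ℕ} (hp : p.Prime) (hodd : p ≠ 2)
    (χ : G →* Multiplicative (ZMod p)) (hsurj : Function.Surjective χ)
    {D : Set G} (hdet : IsDetermining D) (hD : ∀ d ∈ D, χ d = 1) : False := by
  haveI : Fact p.Prime := ⟨hp⟩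
  have hχ1 : χ ≠ 1 := by
    intro h
    obtain ⟨x, hx⟩ := hsurj (Multiplicative.ofAdd 1)
    rw [h] at hx
    have h0 : ((1 : ZMod p)) = 0 := by
      have := congrArg Multiplicative.toAdd hx
      simpa using this.symm
    exact one_ne_zero h0
  have hdvd : p ∣ Nat.card G := by
    have h := Subgroup.card_dvd_of_surjective χ hsurj
    rwa [Nat.card_congr Multiplicative.toAdd, Nat.card_zmod] at h
  obtain ⟨z, hz⟩ := exists_prime_orderOf_dvd_card' p hdvd
  have hz1 : z ≠ 1 := by
    intro h; rw [h, orderOf_one] at hz; exact hp.one_lt.ne' hz.symm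
  have hzp : z ^ p = 1 := by rw [← hz]; exact pow_orderOf_eq_one z
  have key : ∀ w : G, w ^ p = 1 → w ≠ 1 → Multiplicative.toAdd (χ w) = -1 := by
    intro w hwp hw1
    by_contra h
    refine aut_false hp χ hdet hD hχ1 hwp hw1 (fun hc => h ?_)
    linear_combination hc
  have h2 : z ^ 2 ≠ 1 := by
    intro h
    have hd := orderOf_dvd_of_pow_eq_one h
    rw [hz] at hd
    exact hodd ((Nat.prime_dvd_prime_iff_eq hp Nat.prime_two).mp hd)
  have hz2p : (z ^ 2) ^ p = 1 := by rw [← pow_mul, mul_comm, pow_mul, hzp, one_pow]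
  have e1 := key z hzp hz1
  have e2 := key (z ^ 2) hz2p h2
  rw [map_pow, toAdd_pow, e1] at e2
  have hone : (1 : ZMod p) = 0 := by
    rw [nsmul_eq_mul] at e2
    linear_combination -e2
  exact one_ne_zero hone

lemma coatom_char {G : Type*} [CommGroup G] [Finite G] {M : Subgroup G} (hM : IsCoatom M) :
    ∃ p : ℕ, p.Prime ∧ ∃ χ : G →* Multiplicative (ZMod p),
      Function.Surjective χ ∧ χ.ker = M := by
  set Q := G ⧸ M with hQdef
  set π := QuotientGroup.mk' M with hπdef
  have hπs : Function.Surjective π := QuotientGroup.mk'_surjective M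
  have hQ1 : Nat.card Q ≠ 1 := by
    intro h
    haveI : Subsingleton Q := (Nat.card_eq_one_iff_unique.mp h).1
    apply hM.1
    rw [eq_top_iff]
    intro x _
    have : π x = π 1 := Subsingleton.elim _ _
    rw [map_one] at this
    exact (QuotientGroup.eq_one_iff x).mp this
  set p := (Nat.card Q).minFac with hpdef
  have hp : p.Prime := Nat.minFac_prime hQ1
  haveI : Fact p.Prime := ⟨hp⟩
  obtain ⟨u, hu⟩ := exists_prime_orderOf_dvd_card' (G := Q) p (Nat.minFac_dvd _)
  have hu1 : u ≠ 1 := by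
    intro h; rw [h, orderOf_one] at hu; exact hp.one_lt.ne' hu.symm
  have htop : Subgroup.zpowers u = ⊤ := by
    have hle : M ≤ Subgroup.comap π (Subgroup.zpowers u) := by
      intro x hx
      rw [Subgroup.mem_comap]
      have : π x = 1 := (QuotientGroup.eq_one_iff x).mpr hx
      rw [this]
      exact Subgroup.one_mem _
    rcases eq_or_lt_of_le hle with he | hlt
    · exfalso
      obtain ⟨x, hx⟩ := hπs u
      have hxm : x ∈ Subgroup.comap π (Subgroup.zpowers u) := by
        rw [Subgroup.mem_comap, hx]
        exact Subgroup.mem_zpowers u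
      rw [← he] at hxm
      have : π x = 1 := (QuotientGroup.eq_one_iff x).mpr hxm
      rw [hx] at this
      exact hu1 this
    · have h1 := hM.2 _ hlt
      have h2 := congrArg (Subgroup.map π) h1
      rw [Subgroup.map_comap_eq, Subgroup.map_top_of_surjective π hπs,
        MonoidHom.range_eq_top.mpr hπs, top_inf_eq] at h2
      exact h2
  have hcard : Nat.card Q = p := by
    have h1 : Nat.card (Subgroup.zpowers u) = p := by rw [Nat.card_zpowers, hu]
    rw [htop, Subgroup.card_top] at h1
    exact h1
  have hup : u ^ p = 1 := by rw [← hu]; exact pow_orderOf_eq_one u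
  set ψ : Multiplicative (ZMod p) →* Q := powZModHom p u hup with hψdef
  have hψinj : Function.Injective ψ := by
    rw [injective_iff_map_eq_one]
    intro a ha
    have hd : orderOf u ∣ (Multiplicative.toAdd a).val := orderOf_dvd_of_pow_eq_one ha
    rw [hu] at hd
    have hlt : (Multiplicative.toAdd a).val < p := ZMod.val_lt _
    have h0 : (Multiplicative.toAdd a).val = 0 := by
      rcases Nat.eq_zero_or_pos (Multiplicative.toAdd a).val with h | h
      · exact h
      · exact absurd (Nat.le_of_dvd h hd) (by omega)
    have : Multiplicative.toAdd a = 0 := (ZMod.val_eq_zero _).mp h0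
    have := congrArg Multiplicative.ofAdd this
    simpa using this
  have hψbij : Function.Bijective ψ := by
    rw [Nat.bijective_iff_injective_and_card]
    exact ⟨hψinj, by rw [Nat.card_congr Multiplicative.toAdd, Nat.card_zmod, hcard]⟩
  set e := MulEquiv.ofBijective ψ hψbij with hedef
  refine ⟨p, hp, e.symm.toMonoidHom.comp π, ?_, ?_⟩
  · exact e.symm.surjective.comp hπs
  · ext x
    rw [MonoidHom.mem_ker, MonoidHom.comp_apply]
    constructor
    · intro h
      have : π x = 1 := by
        have := congrArg e h
        rwa [MulEquiv.toMonoidHom_eq_coe, MonoidHom.coe_coe, MulEquiv.apply_symm_apply,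
          map_one] at this
      exact (QuotientGroup.eq_one_iff x).mp this
    · intro h
      have : π x = 1 := (QuotientGroup.eq_one_iff x).mpr h
      rw [MulEquiv.toMonoidHom_eq_coe, MonoidHom.coe_coe, this, map_one]

theorem stmt17 {G : Type*} [CommGroup G] [Finite G] (h3 : 3 ≤ Nat.card G) :
    detNumber G = genNumber G := by
  classical
  have hFin := Fintype.ofFinite G
  have hdet_of_gen : ∀ D : Finset G, Subgroup.closure (D : Set G) = ⊤ →
      IsDetermining (D : Set G) := by
    intro D hD φ hφ
    have h : φ.toMonoidHom = (MulEquiv.refl G).toMonoidHom :=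
      MonoidHom.eq_of_eqOn_dense hD (fun x hx => hφ x hx)
    ext x
    exact DFunLike.congr_fun h x
  have hgen_ne : {n | ∃ D : Finset G, D.card = n ∧ Subgroup.closure (D : Set G) = ⊤}.Nonempty :=
    ⟨(Finset.univ : Finset G).card, Finset.univ, rfl, by
      rw [Finset.coe_univ, Subgroup.closure_univ]⟩
  have hdet_ne : {n | ∃ D : Finset G, D.card = n ∧ IsDetermining (D : Set G)}.Nonempty := by
    obtain ⟨n, D, h1, h2⟩ := hgen_ne
    exact ⟨n, D, h1, hdet_of_gen D h2⟩
  have hle1 : detNumber G ≤ genNumber G := by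
    obtain ⟨Dg, hcard, hgen⟩ := Nat.sInf_mem hgen_ne
    calc detNumber G ≤ Dg.card := Nat.sInf_le ⟨Dg, rfl, hdet_of_gen Dg hgen⟩
    _ = genNumber G := hcard
  have hle2 : genNumber G ≤ detNumber G := by
    obtain ⟨D, hcard, hdet⟩ := Nat.sInf_mem hdet_ne
    suffices h : ∃ D' : Finset G, Subgroup.closure (D' : Set G) = ⊤ ∧ D'.card ≤ D.card by
      obtain ⟨D', hD', hlt⟩ := h
      calc genNumber G ≤ D'.card := Nat.sInf_le ⟨D', rfl, hD'⟩
      _ ≤ D.card := hlt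
      _ = detNumber G := hcard
    by_cases hH : Subgroup.closure (D : Set G) = ⊤
    · exact ⟨D, hH, le_rfl⟩
    set H := Subgroup.closure (D : Set G) with hHdef
    obtain ⟨M, hM, hHM⟩ := (eq_top_or_exists_le_coatom H).resolve_left hH
    obtain ⟨p, hp, χ, hχsurj, hχker⟩ := coatom_char hM
    haveI : Fact p.Prime := ⟨hp⟩
    have hDker : ∀ d ∈ (D : Set G), χ d = 1 := fun d hd => by
      rw [← MonoidHom.mem_ker, hχker]
      exact hHM (Subgroup.subset_closure hd)
    have hp2 : p = 2 := by
      by_contra hne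
      exact odd_char_false hp hne χ hχsurj hdet hDker
    subst hp2
    have hχ1 : χ ≠ 1 := by
      intro h
      apply hM.1
      rw [← hχker, h, MonoidHom.ker_one]
    have hbad : ∀ z : G, z ^ 2 = 1 → z ≠ 1 → z ∉ M := by
      intro z hz2 hz1 hzM
      apply aut_false Nat.prime_two χ hdet hDker hχ1 hz2 hz1
      have hz : χ z = 1 := by rw [← MonoidHom.mem_ker, hχker]; exact hzM
      rw [hz, toAdd_one, add_zero]
      exact one_ne_zero
    have hdvd2 : 2 ∣ Nat.card G := by
      have h := Subgroup.card_dvd_of_surjective χ hχsurj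
      rwa [Nat.card_congr Multiplicative.toAdd, Nat.card_zmod] at h
    obtain ⟨t, ht⟩ := exists_prime_orderOf_dvd_card' 2 hdvd2
    have ht1 : t ≠ 1 := by
      intro h; rw [h, orderOf_one] at ht; omega
    have ht2 : t ^ 2 = 1 := by rw [← ht]; exact pow_orderOf_eq_one t
    have htM : t ∉ M := hbad t ht2 ht1
    have ht2' : t ^ (2 : ℤ) = 1 := by
      rw [show (2 : ℤ) = ((2 : ℕ) : ℤ) from rfl, zpow_natCast, ht2]
    have hHeqM : H = M := by
      by_contra hne
      set K := H ⊔ Subgroup.zpowers t with hKdef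
      have hKtop : K ≠ ⊤ := by
        intro htop
        apply hne
        refine le_antisymm hHM ?_
        intro x hxM
        have hxK : x ∈ (K : Set G) := by rw [htop]; trivial
        rw [hKdef, Subgroup.mul_normal H (Subgroup.zpowers t)] at hxK
        obtain ⟨h, hh, y, hy, hxy0⟩ := hxK
        have hxy : h * y = x := hxy0
        obtain ⟨k, hk⟩ := Subgroup.mem_zpowers_iff.mp hy
        rcases Int.even_or_odd k with ⟨j, hj⟩ | ⟨j, hj⟩
        · have hy1 : y = 1 := by
            rw [← hk, hj, ← two_mul, zpow_mul, ht2', one_zpow]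
          rw [← hxy, hy1, mul_one]; exact hh
        · have hyt : y = t := by
            rw [← hk, hj, zpow_add, zpow_mul, ht2', one_zpow, one_mul, zpow_one]
          exfalso
          apply htM
          have : t = h⁻¹ * x := by rw [← hxy, hyt]; group
          rw [this]
          exact M.mul_mem (M.inv_mem (hHM hh)) hxM
      obtain ⟨N, hN, hKN⟩ := (eq_top_or_exists_le_coatom K).resolve_left hKtop
      obtain ⟨q, hq, χ', hχ's, hχ'k⟩ := coatom_char hN
      haveI : Fact q.Prime := ⟨hq⟩
      have hHN : H ≤ N := le_trans le_sup_left hKN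
      have hDker' : ∀ d ∈ (D : Set G), χ' d = 1 := fun d hd => by
        rw [← MonoidHom.mem_ker, hχ'k]
        exact hHN (Subgroup.subset_closure hd)
      by_cases hq2 : q = 2
      · subst hq2
        refine aut_false Nat.prime_two χ' hdet hDker' ?_ ht2 ht1 ?_
        · intro h
          apply hN.1
          rw [← hχ'k, h, MonoidHom.ker_one]
        · have htN : t ∈ N := hKN ((le_sup_right : Subgroup.zpowers t ≤ K) (Subgroup.mem_zpowers t))
          have hχ't : χ' t = 1 := by rw [← MonoidHom.mem_ker, hχ'k]; exact htN
          rw [hχ't, toAdd_one, add_zero]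
          exact one_ne_zero
      · exact odd_char_false hq hq2 χ' hχ's hdet hDker'
    have hDne : D.Nonempty := by
      rcases D.eq_empty_or_nonempty with he | hne
      · exfalso
        have hMbot : M = ⊥ := by
          rw [← hHeqM, hHdef, he]
          simp
        have hinj : Function.Injective χ := by
          rw [← MonoidHom.ker_eq_bot_iff, hχker, hMbot]
        have hcardG : Nat.card G = 2 := by
          rw [Nat.card_eq_of_bijective χ ⟨hinj, hχsurj⟩,
            Nat.card_congr Multiplicative.toAdd, Nat.card_zmod]
        omega
      · exact hne
    obtain ⟨d, hd⟩ := hDne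
    have hdM : d ∈ M := by
      rw [← hHeqM]
      exact Subgroup.subset_closure hd
    have hodd : ¬ 2 ∣ orderOf d := by
      intro hdvd
      obtain ⟨r, hr⟩ := hdvd
      have hro : 0 < orderOf d := orderOf_pos d
      have hr0 : r ≠ 0 := by omega
      have hw2 : (d ^ r) ^ 2 = 1 := by
        rw [← pow_mul, mul_comm, ← hr, pow_orderOf_eq_one]
      have hw1 : d ^ r ≠ 1 := by
        intro h
        have := Nat.le_of_dvd (Nat.pos_of_ne_zero hr0) (hr ▸ orderOf_dvd_of_pow_eq_one h)
        omega
      exact hbad _ hw2 hw1 (Subgroup.pow_mem M hdM r)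
    set D' : Finset G := insert (d * t) (D.erase d) with hD'def
    have hdtD' : d * t ∈ Subgroup.closure (D' : Set G) :=
      Subgroup.subset_closure (by simp [hD'def])
    have hd2 : d ^ 2 ∈ Subgroup.closure (D' : Set G) := by
      have h := Subgroup.pow_mem _ hdtD' 2
      rwa [mul_pow, ht2, mul_one] at h
    have hdc : d ∈ Subgroup.closure (D' : Set G) := by
      have hkey : (d ^ 2) ^ ((orderOf d + 1) / 2) = d := by
        rw [← pow_mul, Nat.mul_div_cancel' (by omega : 2 ∣ orderOf d + 1),
          pow_succ, pow_orderOf_eq_one, one_mul]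
      rw [← hkey]
      exact Subgroup.pow_mem _ hd2 _
    have htc : t ∈ Subgroup.closure (D' : Set G) := by
      have h := Subgroup.mul_mem _ (Subgroup.inv_mem _ hdc) hdtD'
      rwa [inv_mul_cancel_left] at h
    have hsub : (D : Set G) ⊆ ↑(Subgroup.closure (D' : Set G)) := by
      intro x hx
      by_cases hxd : x = d
      · rw [hxd]; exact hdc
      · exact Subgroup.subset_closure (by simp [hD'def, Finset.mem_erase, hxd, hx])
    have hclos : Subgroup.closure (D' : Set G) = ⊤ := by
      apply hM.2
      refine lt_of_le_of_ne ?_ ?_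
      · rw [← hHeqM, hHdef]
        exact Subgroup.closure_le _ |>.mpr hsub
      · intro h
        rw [h] at htM
        exact htM htc
    refine ⟨D', hclos, ?_⟩
    have h1 : D'.card ≤ (D.erase d).card + 1 := Finset.card_insert_le _ _
    have h2 : (D.erase d).card = D.card - 1 := Finset.card_erase_of_mem hd
    have h3 : 1 ≤ D.card := Finset.card_pos.mpr ⟨d, hd⟩
    omega
  omega
end

section
/- Let G = K × H be a direct product of finite groups with coprime orders such that γ(K) ≥ γ(H) and α(K) = γ(K). Then α(G) = γ(G). -/
open Subgroup

lemma gen_set_nonempty (G : Type*) [Group G] [Finite G] :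
    {n | ∃ D : Finset G, D.card = n ∧ Subgroup.closure (D : Set G) = ⊤}.Nonempty := by
  classical
  have : Fintype G := Fintype.ofFinite G
  exact ⟨(Finset.univ : Finset G).card, Finset.univ, rfl, by simp⟩

lemma gen_isDet {G : Type*} [Group G] {D : Finset G}
    (h : Subgroup.closure (D : Set G) = ⊤) : IsDetermining (D : Set G) := by
  intro φ hφ
  have key : ∀ x : G, φ x = x := by
    intro x
    have hx : x ∈ Subgroup.closure (D : Set G) := h ▸ Subgroup.mem_top x
    induction hx using Subgroup.closure_induction with
    | mem y hy => exact hφ y hy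
    | one => exact map_one φ
    | mul a b _ _ ha hb => rw [map_mul, ha, hb]
    | inv a _ ha => rw [map_inv, ha]
  exact MulEquiv.ext key

lemma det_le_gen (G : Type*) [Group G] [Finite G] : detNumber G ≤ genNumber G := by
  obtain ⟨D, hcard, hD⟩ := Nat.sInf_mem (gen_set_nonempty G)
  exact Nat.sInf_le ⟨D, hcard, gen_isDet hD⟩

lemma coprime_sub_top {K H : Type*} [Group K] [Group H] [Finite K] [Finite H]
    (hcop : Nat.Coprime (Nat.card K) (Nat.card H)) (S : Subgroup (K × H))
    (h1 : ∀ k : K, ∃ h : H, (k, h) ∈ S) (h2 : ∀ h : H, ∃ k : K, (k, h) ∈ S) : S = ⊤ := by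
  set e := (Nat.card H) ^ (Nat.totient (Nat.card K)) with he
  have hmod : e ≡ 1 [MOD Nat.card K] := Nat.ModEq.pow_totient hcop.symm
  have hdvd : (Nat.card H) ∣ e :=
    dvd_pow_self _ (Nat.totient_pos.mpr Nat.card_pos).ne'
  have hKmem : ∀ k : K, ((k, 1) : K × H) ∈ S := by
    intro k
    obtain ⟨h, hkh⟩ := h1 k
    have : ((k, h) : K × H) ^ e ∈ S := pow_mem hkh e
    have heq : ((k, h) : K × H) ^ e = (k, 1) := by
      have hh : h ^ e = 1 := orderOf_dvd_iff_pow_eq_one.mp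
        ((orderOf_dvd_natCard h).trans hdvd)
      have hk : k ^ e = k := by
        have : e ≡ 1 [MOD orderOf k] := hmod.of_dvd (orderOf_dvd_natCard k)
        calc k ^ e = k ^ 1 := pow_eq_pow_iff_modEq.mpr this
         _ = k := pow_one k
      rw [Prod.pow_mk, hh, hk]
    rwa [heq] at this
  have hHmem : ∀ h : H, ((1, h) : K × H) ∈ S := by
    intro h
    obtain ⟨k, hkh⟩ := h2 h
    set e' := (Nat.card K) ^ (Nat.totient (Nat.card H)) with he'
    have hmod' : e' ≡ 1 [MOD Nat.card H] := Nat.ModEq.pow_totient hcop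
    have hdvd' : (Nat.card K) ∣ e' :=
      dvd_pow_self _ (Nat.totient_pos.mpr Nat.card_pos).ne'
    have : ((k, h) : K × H) ^ e' ∈ S := pow_mem hkh e'
    have heq : ((k, h) : K × H) ^ e' = (1, h) := by
      have hk : k ^ e' = 1 := orderOf_dvd_iff_pow_eq_one.mp
        ((orderOf_dvd_natCard k).trans hdvd')
      have hh : h ^ e' = h := by
        have : e' ≡ 1 [MOD orderOf h] := hmod'.of_dvd (orderOf_dvd_natCard h)
        calc h ^ e' = h ^ 1 := pow_eq_pow_iff_modEq.mpr this
         _ = h := pow_one h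
      rw [Prod.pow_mk, hh, hk]
    rwa [heq] at this
  rw [eq_top_iff]
  rintro ⟨k, h⟩ -
  have : ((k, 1) : K × H) * (1, h) = (k, h) := by simp
  rw [← this]
  exact mul_mem (hKmem k) (hHmem h)

lemma gen_prod_le {K H : Type*} [Group K] [Group H] [Finite K] [Finite H]
    (hcop : Nat.Coprime (Nat.card K) (Nat.card H))
    (hge : genNumber H ≤ genNumber K) :
    genNumber (K × H) ≤ genNumber K := by
  classical
  obtain ⟨DK, hcardK, hDK⟩ := Nat.sInf_mem (gen_set_nonempty K)
  obtain ⟨DH, hcardH, hDH⟩ := Nat.sInf_mem (gen_set_nonempty H)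
  set lK := DK.toList with hlK
  set lH := DH.toList ++ List.replicate (genNumber K - genNumber H) 1 with hlH
  have hcardK' : DK.card = genNumber K := hcardK
  have hcardH' : DH.card = genNumber H := hcardH
  have hlenK : lK.length = genNumber K := by simp [hlK, hcardK']
  have hlenH : lH.length = genNumber K := by
    simp only [hlH, List.length_append, List.length_replicate, Finset.length_toList, hcardH']
    omega
  set D := (lK.zip lH).toFinset with hD
  have hcard : D.card ≤ genNumber K := by
    calc D.card ≤ (lK.zip lH).length := List.toFinset_card_le _
      _ = genNumber K := by rw [List.length_zip, hlenK, hlenH, min_self]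
  have hclosure : Subgroup.closure (D : Set (K × H)) = ⊤ := by
    apply coprime_sub_top hcop
    · intro k
      have hk : k ∈ Subgroup.map (MonoidHom.fst K H) (Subgroup.closure (D : Set (K × H))) := by
        rw [MonoidHom.map_closure]
        have himg : (MonoidHom.fst K H) '' (D : Set (K × H)) = (DK : Set K) := by
          ext x
          simp only [Set.mem_image, Finset.mem_coe, hD, List.mem_toFinset]
          constructor
          · rintro ⟨⟨a, b⟩, hab, rfl⟩
            have : a ∈ lK := (List.of_mem_zip hab).1
            simpa [hlK] using this
          · intro hx
            have hx' : x ∈ lK := by simpa [hlK] using hx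
            have : x ∈ (lK.zip lH).map Prod.fst := by
              rw [List.map_fst_zip (by rw [hlenK, hlenH])]
              exact hx'
            obtain ⟨p, hp, hpx⟩ := List.mem_map.mp this
            exact ⟨p, hp, hpx⟩
        rw [himg, hDK]
        exact Subgroup.mem_top k
      obtain ⟨⟨a, b⟩, hab, hax⟩ := Subgroup.mem_map.mp hk
      exact ⟨b, by simpa [← hax] using hab⟩
    · intro h
      have hh : h ∈ Subgroup.map (MonoidHom.snd K H) (Subgroup.closure (D : Set (K × H))) := by
        rw [MonoidHom.map_closure]
        have himg : (MonoidHom.snd K H) '' (D : Set (K × H)) = {x | x ∈ lH} := by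
          ext x
          simp only [Set.mem_image, Finset.mem_coe, hD, List.mem_toFinset, Set.mem_setOf_eq]
          constructor
          · rintro ⟨⟨a, b⟩, hab, rfl⟩
            exact (List.of_mem_zip hab).2
          · intro hx
            have : x ∈ (lK.zip lH).map Prod.snd := by
              rw [List.map_snd_zip (by rw [hlenK, hlenH])]
              exact hx
            obtain ⟨p, hp, hpx⟩ := List.mem_map.mp this
            exact ⟨p, hp, hpx⟩
        rw [himg]
        have hsub : (DH : Set H) ⊆ {x | x ∈ lH} := by
          intro x hx
          simp [hlH]
          left
          simpa using hx
        have := Subgroup.closure_mono hsub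
        rw [hDH] at this
        exact (top_le_iff.mp this) ▸ Subgroup.mem_top h
      obtain ⟨⟨a, b⟩, hab, hbx⟩ := Subgroup.mem_map.mp hh
      exact ⟨a, by simpa [← hbx] using hab⟩
  calc genNumber (K × H) ≤ D.card := Nat.sInf_le ⟨D, rfl, hclosure⟩
    _ ≤ genNumber K := hcard

lemma det_le_det_prod {K H : Type*} [Group K] [Group H] [Finite K] [Finite H] :
    detNumber K ≤ detNumber (K × H) := by
  classical
  have hne : {n | ∃ D : Finset (K × H), D.card = n ∧ IsDetermining (D : Set (K × H))}.Nonempty := by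
    obtain ⟨D, hcard, hD⟩ := Nat.sInf_mem (gen_set_nonempty (K × H))
    exact ⟨D.card, D, rfl, gen_isDet hD⟩
  obtain ⟨D, hcard, hD⟩ := Nat.sInf_mem hne
  set P := D.image Prod.fst with hP
  have hPdet : IsDetermining (P : Set K) := by
    intro φ hφ
    have hψ : (φ.prodCongr (MulEquiv.refl H)) = MulEquiv.refl (K × H) := by
      apply hD
      rintro ⟨a, b⟩ hab
      have ha : a ∈ P := Finset.mem_image_of_mem Prod.fst hab
      have : φ a = a := hφ a (by exact_mod_cast ha)
      simp [MulEquiv.prodCongr, this]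
    ext x
    have := congrArg (fun ψ => ψ.toFun (x, 1)) hψ
    simpa [MulEquiv.prodCongr] using this
  calc detNumber K ≤ P.card := Nat.sInf_le ⟨P, rfl, hPdet⟩
    _ ≤ D.card := Finset.card_image_le
    _ = detNumber (K × H) := hcard

theorem stmt18 {K H : Type*} [Group K] [Group H] [Finite K] [Finite H]
    (hcop : Nat.Coprime (Nat.card K) (Nat.card H))
    (hge : genNumber H ≤ genNumber K) (hK : detNumber K = genNumber K) :
    detNumber (K × H) = genNumber (K × H) := by
  apply le_antisymm (det_le_gen (K × H))
  calc genNumber (K × H) ≤ genNumber K := gen_prod_le hcop hge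
    _ = detNumber K := hK.symm
    _ ≤ detNumber (K × H) := det_le_det_prod
end
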